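/- arXiv:1210.2083 — 5 statements merged into one kernel-verified Lean document; each statement's English description precedes it below -/
import Mathlib

section
/- Let A(x) ∈ M_{L×N}(ℤ[x]) with non-constant part A_*(x). Suppose the columns of A_*(x) are ℚ-linearly dependent, i.e. there exists a nonzero m ∈ ℚ^N with A_*(x)m identically zero. Then there exists an infinite subset X ⊂ 𝕋^N such that for every subtorus 𝒯 of 𝕋^L there exists ε > 0 such that for every integer n, the set A(n)X = {A(n)x : x ∈ X} is not ε-dense in any translate of 𝒯. (One may take X = {m/j : j = 1, 2, …}, interpreting m as an integer vector after clearing denominators, since then A(n)X = A_0 X for all n.) -/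
open scoped BigOperators
open Matrix

/-- The one-dimensional torus `𝕋 = ℝ/ℤ`. -/
abbrev Torus1 := AddCircle (1 : ℝ)

/-- Action of an `L × N` integer matrix on the torus `𝕋^N`, by left multiplication. -/
noncomputable def torusAct {L N : ℕ} (A : Matrix (Fin L) (Fin N) ℤ) (x : Fin N → Torus1) :
    Fin L → Torus1 :=
  fun i => ∑ j, A i j • x j

/-- `Y` is `ε`-dense in the full torus `𝕋^L`: every point of `𝕋^L` is within distance `ε`
of some element of `Y` in every coordinate. -/
def EpsDense {L : ℕ} (Y : Set (Fin L → Torus1)) (ε : ℝ) : Prop :=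
  ∀ t : Fin L → Torus1, ∃ y ∈ Y, ∀ i, dist (y i) (t i) ≤ ε

/-- `Y` is `ε`-dense in a subset `S` of `𝕋^L`. -/
def EpsDenseIn {L : ℕ} (Y S : Set (Fin L → Torus1)) (ε : ℝ) : Prop :=
  ∀ s ∈ S, ∃ y ∈ Y, ∀ i, dist (y i) (s i) ≤ ε

/-- A subtorus of `𝕋^L`: a nontrivial closed connected (Lie) subgroup. -/
def IsSubtorus {L : ℕ} (T : AddSubgroup (Fin L → Torus1)) : Prop :=
  IsClosed (T : Set (Fin L → Torus1)) ∧ IsConnected (T : Set (Fin L → Torus1)) ∧ T ≠ ⊥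

/-- The translate `t + 𝒯` of a subtorus. -/
def translateOf {L : ℕ} (t : Fin L → Torus1) (T : AddSubgroup (Fin L → Torus1)) :
    Set (Fin L → Torus1) :=
  (fun y => t + y) '' (T : Set (Fin L → Torus1))

/-- Evaluation at an integer `n` of the matrix of polynomials
`A(x) = A 0 + x • A 1 + ⋯ + x^D • A D`. -/
def evalMat {L N D : ℕ} (A : Fin (D + 1) → Matrix (Fin L) (Fin N) ℤ) (n : ℤ) :
    Matrix (Fin L) (Fin N) ℤ :=
  ∑ d : Fin (D + 1), n ^ (d : ℕ) • A d

/-- Condition (a): the columns of the non-constant part `A_*(x)` are `ℚ`-linearly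
independent, i.e. the only `w ∈ ℚ^N` with `A_*(x) w ≡ 0` is `w = 0`. -/
def CondA {L N D : ℕ} (A : Fin (D + 1) → Matrix (Fin L) (Fin N) ℤ) : Prop :=
  ∀ w : Fin N → ℚ,
    (∀ d : Fin (D + 1), d ≠ 0 → ((A d).map ((↑) : ℤ → ℚ)).mulVec w = 0) → w = 0

/-- Condition (b): whenever `v ⬝ A_d w = 0` for all `d = 1, …, D`, also `v ⬝ A_0 w = 0`. -/
def CondB {L N D : ℕ} (A : Fin (D + 1) → Matrix (Fin L) (Fin N) ℤ) : Prop :=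
  ∀ (v : Fin L → ℚ) (w : Fin N → ℚ),
    (∀ d : Fin (D + 1), d ≠ 0 → v ⬝ᵥ ((A d).map ((↑) : ℤ → ℚ)).mulVec w = 0) →
    v ⬝ᵥ ((A 0).map ((↑) : ℤ → ℚ)).mulVec w = 0

/-- `‖A_*‖_∞`: the maximum of the absolute values of the integer coefficients appearing
in the non-constant part of `A`. -/
def starNorm {L N D : ℕ} (A : Fin (D + 1) → Matrix (Fin L) (Fin N) ℤ) : ℕ :=
  (Finset.univ.filter (fun d : Fin (D + 1) => d ≠ 0)).sup fun d =>
    Finset.univ.sup fun p : Fin L × Fin N => (A d p.1 p.2).natAbs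

section Statement3Aux

open AddSubgroup Metric

private lemma st3_coe_sum {ι : Type*} (s : Finset ι) (f : ι → ℝ) :
    ((∑ j ∈ s, f j : ℝ) : Torus1) = ∑ j ∈ s, (f j : Torus1) :=
  map_sum (QuotientAddGroup.mk' (zmultiples (1:ℝ))) f s

private lemma st3_torusAct_coe {L N : ℕ} (B : Matrix (Fin L) (Fin N) ℤ) (r : Fin N → ℝ) :
    torusAct B (fun j => ((r j : ℝ) : Torus1))
      = fun i => ((∑ j, (B i j : ℝ) * r j : ℝ) : Torus1) := by
  funext i
  rw [torusAct, st3_coe_sum]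
  refine Finset.sum_congr rfl fun j _ => ?_
  rw [← AddCircle.coe_zsmul, zsmul_eq_mul]

private lemma st3_key_eval {L N D : ℕ} (A : Fin (D + 1) → Matrix (Fin L) (Fin N) ℤ)
    (m' : Fin N → ℤ)
    (hz : ∀ d : Fin (D+1), d ≠ 0 → ∀ i, ∑ j, A d i j * m' j = 0)
    (n : ℤ) (k : ℕ) :
    torusAct (evalMat A n) (fun j => (((m' j : ℝ)/((k:ℝ)+1) : ℝ) : Torus1))
      = fun i => ((((∑ j, A 0 i j * m' j : ℤ) : ℝ)/((k:ℝ)+1) : ℝ) : Torus1) := by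
  rw [st3_torusAct_coe]
  funext i
  congr 1
  have hint : ∑ j, (evalMat A n) i j * m' j = ∑ j, A 0 i j * m' j := by
    have h1 : ∀ j, (evalMat A n) i j = ∑ d : Fin (D+1), n ^ (d:ℕ) * A d i j := by
      intro j
      rw [evalMat]
      simp [Matrix.sum_apply]
    calc ∑ j, (evalMat A n) i j * m' j
        = ∑ j, ∑ d : Fin (D+1), n ^ (d:ℕ) * A d i j * m' j := by
          refine Finset.sum_congr rfl fun j _ => ?_
          rw [h1, Finset.sum_mul]
      _ = ∑ d : Fin (D+1), ∑ j, n ^ (d:ℕ) * A d i j * m' j := Finset.sum_comm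
      _ = ∑ d : Fin (D+1), n ^ (d:ℕ) * ∑ j, A d i j * m' j := by
          refine Finset.sum_congr rfl fun d _ => ?_
          rw [Finset.mul_sum]
          refine Finset.sum_congr rfl fun j _ => by ring
      _ = ∑ j, A 0 i j * m' j := by
          rw [Finset.sum_eq_single 0]
          · norm_num
          · intro d _ hd
            rw [hz d hd i, mul_zero]
          · intro h; exact absurd (Finset.mem_univ 0) h
  calc ∑ j, ((evalMat A n) i j : ℝ) * ((m' j : ℝ)/((k:ℝ)+1))
      = ((∑ j, (evalMat A n) i j * m' j : ℤ) : ℝ) / ((k:ℝ)+1) := by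
        push_cast
        rw [Finset.sum_div]
        refine Finset.sum_congr rfl fun j _ => by ring
    _ = ((∑ j, A 0 i j * m' j : ℤ) : ℝ) / ((k:ℝ)+1) := by rw [hint]

private lemma st3_exists_intvec {N : ℕ} (m : Fin N → ℚ) (hm : m ≠ 0)
    {L D : ℕ} (A : Fin (D + 1) → Matrix (Fin L) (Fin N) ℤ)
    (hdep : ∀ d : Fin (D + 1), d ≠ 0 → ((A d).map ((↑) : ℤ → ℚ)).mulVec m = 0) :
    ∃ m' : Fin N → ℤ, (∃ j0, m' j0 ≠ 0) ∧
      (∀ d : Fin (D+1), d ≠ 0 → ∀ i, ∑ j, A d i j * m' j = 0) := by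
  obtain ⟨j0, hj0⟩ : ∃ j, m j ≠ 0 := by
    by_contra h; push_neg at h; exact hm (funext h)
  set c : ℕ := ∏ j, (m j).den with hc
  have hcpos : 0 < c := Finset.prod_pos fun j _ => (m j).pos
  set m' : Fin N → ℤ := fun j => (m j).num * ((c / (m j).den : ℕ) : ℤ) with hm'
  have hm'c : ∀ j, (m' j : ℚ) = (c:ℚ) * m j := by
    intro j
    obtain ⟨e, he⟩ : (m j).den ∣ c := Finset.dvd_prod_of_mem _ (Finset.mem_univ j)
    have hde : (c / (m j).den : ℕ) = e := by rw [he]; exact Nat.mul_div_cancel_left _ (m j).pos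
    have hnum : ((m j).num : ℚ) = m j * (m j).den :=
      (div_eq_iff (by exact_mod_cast (m j).den_nz)).mp (m j).num_div_den
    have hmj : m' j = (m j).num * (e:ℤ) := by rw [hm']; simp only [hde]
    rw [hmj, he]
    push_cast
    rw [hnum]
    ring
  refine ⟨m', ⟨j0, ?_⟩, ?_⟩
  · intro h0
    have : (c:ℚ) * m j0 = 0 := by rw [← hm'c, h0]; simp
    rcases mul_eq_zero.mp this with h | h
    · exact absurd h (by exact_mod_cast hcpos.ne')
    · exact hj0 h
  · intro d hd i
    have h1 := congrFun (hdep d hd) i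
    simp only [Matrix.mulVec, dotProduct, Matrix.map_apply, Pi.zero_apply] at h1
    have h2 : ∑ j, (A d i j : ℚ) * (m' j : ℚ) = 0 := by
      calc ∑ j, (A d i j : ℚ) * (m' j : ℚ)
          = (c:ℚ) * ∑ j, (A d i j : ℚ) * m j := by
            rw [Finset.mul_sum]
            exact Finset.sum_congr rfl fun j _ => by rw [hm'c]; ring
        _ = 0 := by rw [h1, mul_zero]
    exact_mod_cast (by push_cast; exact h2 : ((∑ j, A d i j * m' j : ℤ) : ℚ) = 0)

private lemma st3_range_infinite {N : ℕ} (m' : Fin N → ℤ) (j0 : Fin N) (hj0 : m' j0 ≠ 0) :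
    (Set.range (fun k : ℕ => (fun j => (((m' j : ℝ)/((k:ℝ)+1) : ℝ) : Torus1)))).Infinite := by
  set M₀ : ℕ := (m' j0).natAbs with hM₀
  have hM₀1 : 1 ≤ M₀ := by
    rw [hM₀, Nat.one_le_iff_ne_zero, Int.natAbs_ne_zero]; exact hj0
  set a : ℝ := (m' j0 : ℝ) with ha
  have ha0 : a ≠ 0 := by rw [ha]; exact_mod_cast hj0
  have haabs : |a| = (M₀ : ℝ) := by rw [ha, hM₀, ← Int.cast_abs, Nat.cast_natAbs]
  apply Set.infinite_of_injective_forall_mem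
    (f := fun k : ℕ => (fun j => (((m' j : ℝ)/(((k + M₀ : ℕ):ℝ)+1) : ℝ) : Torus1)))
  · intro k k' hkk
    have h := congrFun hkk j0
    simp only [] at h
    set K : ℝ := ((k + M₀ : ℕ) : ℝ) + 1 with hK
    set K' : ℝ := ((k' + M₀ : ℕ) : ℝ) + 1 with hK'
    have hKpos : (0:ℝ) < K := by positivity
    have hK'pos : (0:ℝ) < K' := by positivity
    have hKge : (M₀:ℝ) + 1 ≤ K := by rw [hK]; push_cast; linarith [Nat.cast_nonneg (α := ℝ) k]
    have hK'ge : (M₀:ℝ) + 1 ≤ K' := by rw [hK']; push_cast; linarith [Nat.cast_nonneg (α := ℝ) k']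
    have h0 : ((a/K - a/K' : ℝ) : Torus1) = 0 := by
      rw [AddCircle.coe_sub, h, sub_self]
    obtain ⟨n, hn⟩ := (AddCircle.coe_eq_zero_iff (1:ℝ)).mp h0
    have hn' : (n:ℝ) = a/K - a/K' := by simpa using hn
    have hbound : ∀ b : ℝ, (M₀:ℝ)+1 ≤ b → |a/b| ≤ (M₀:ℝ)/((M₀:ℝ)+1) := by
      intro b hb
      have hbpos : (0:ℝ) < b := by
        have : (0:ℝ) < (M₀:ℝ)+1 := by positivity
        linarith
      rw [abs_div, haabs, abs_of_pos hbpos]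
      apply div_le_div_of_nonneg_left (by positivity) (by positivity) hb
    have hfrac : (M₀:ℝ)/((M₀:ℝ)+1) < 1 := by
      rw [div_lt_one (by positivity)]; linarith
    have habs1 : |a/K - a/K'| < 1 := by
      rcases le_or_gt 0 a with hapos | haneg
      · have h1 : 0 ≤ a/K := by positivity
        have h2 : 0 ≤ a/K' := by positivity
        have h3 := hbound K hKge
        have h4 := hbound K' hK'ge
        rw [abs_of_nonneg h1] at h3
        rw [abs_of_nonneg h2] at h4
        rw [abs_sub_lt_iff]
        constructor <;> linarith
      · have h1 : a/K ≤ 0 := div_nonpos_of_nonpos_of_nonneg haneg.le hKpos.le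
        have h2 : a/K' ≤ 0 := div_nonpos_of_nonpos_of_nonneg haneg.le hK'pos.le
        have h3 := hbound K hKge
        have h4 := hbound K' hK'ge
        rw [abs_of_nonpos h1] at h3
        rw [abs_of_nonpos h2] at h4
        rw [abs_sub_lt_iff]
        constructor <;> linarith
    have hn0 : n = 0 := by
      have : |(n:ℝ)| < 1 := by rw [hn']; exact habs1
      rw [← Int.cast_abs] at this
      exact Int.abs_lt_one_iff.mp (by exact_mod_cast this)
    have heqd : a/K = a/K' := by
      have : (0:ℝ) = a/K - a/K' := by rw [← hn', hn0]; simp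
      linarith
    have hKK' : K = K' := by
      rw [div_eq_div_iff hKpos.ne' hK'pos.ne'] at heqd
      have := mul_left_cancel₀ ha0 heqd
      linarith
    have hcast : ((k + M₀ : ℕ) : ℝ) = ((k' + M₀ : ℕ) : ℝ) := by
      rw [hK, hK'] at hKK'; linarith
    have : k + M₀ = k' + M₀ := by exact_mod_cast hcast
    omega
  · intro k
    exact ⟨k + M₀, rfl⟩

private lemma st3_dense_of_connected_subgroup (H : AddSubgroup Torus1)
    (hconn : IsPreconnected (H : Set Torus1)) (x : Torus1) (hxH : x ∈ H) (hx0 : x ≠ 0) :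
    Dense (H : Set Torus1) := by
  set π : ℝ →+ Torus1 := QuotientAddGroup.mk' (zmultiples (1:ℝ)) with hπ
  have hπc : Continuous π := AddCircle.continuous_mk' 1
  have hπs : Function.Surjective π := QuotientAddGroup.mk'_surjective _
  set G : AddSubgroup ℝ := H.comap π with hG
  rcases G.dense_or_cyclic with hd | ⟨a, ha⟩
  · have h1 : (π '' (G : Set ℝ)) ⊆ (H : Set Torus1) := by
      rintro _ ⟨g, hg, rfl⟩; exact hg
    exact Dense.mono h1 (hπs.denseRange.dense_image hπc hd)
  · exfalso
    have h1G : (1:ℝ) ∈ G := by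
      have hπ1 : π (1:ℝ) = 0 := by
        rw [hπ]; simpa using AddCircle.coe_period (1:ℝ)
      show π 1 ∈ H
      rw [hπ1]; exact H.zero_mem
    rw [ha, AddSubgroup.mem_closure_singleton] at h1G
    obtain ⟨z, hz⟩ := h1G
    have hz0 : z ≠ 0 := by rintro rfl; simp at hz
    have hq1 : (1:ℝ) ≤ |(z:ℝ)| := by
      rw [← Int.cast_abs]
      exact_mod_cast Int.one_le_abs hz0
    have hqpos : (0:ℝ) < |(z:ℝ)| := lt_of_lt_of_le one_pos hq1
    set q : ℝ := |(z:ℝ)| with hqdef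
    have hkill : ∀ h ∈ H, h ≠ 0 → 1/(2*q) ≤ ‖h‖ := by
      intro h hh hne
      by_contra hlt
      push_neg at hlt
      obtain ⟨x₀, hx₀⟩ := hπs h
      have hx₀G : x₀ ∈ G := by show π x₀ ∈ H; rw [hx₀]; exact hh
      rw [ha, AddSubgroup.mem_closure_singleton] at hx₀G
      obtain ⟨k, hk⟩ := hx₀G
      set r : ℝ := x₀ - round x₀ with hr
      have hrcoe : ((r : ℝ) : Torus1) = h := by
        have hint : (((round x₀ : ℤ) : ℝ) : Torus1) = 0 :=
          (AddCircle.coe_eq_zero_iff (1:ℝ)).mpr ⟨round x₀, by simp⟩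
        rw [hr, AddCircle.coe_sub, hint, sub_zero, ← hx₀]; rfl
      have hrabs : |r| ≤ 1/2 := abs_sub_round x₀
      have hnorm : ‖h‖ = |r| := by
        rw [← hrcoe, AddCircle.norm_coe_eq_abs_iff 1 one_ne_zero]
        simpa using hrabs
      have hza : (z:ℝ) * a = 1 := by rw [zsmul_eq_mul] at hz; exact_mod_cast hz
      have hx₀a : x₀ = (k:ℝ) * a := by rw [zsmul_eq_mul] at hk; exact_mod_cast hk.symm
      have hzr : (z:ℝ) * r = ((k - z * round x₀ : ℤ) : ℝ) := by
        push_cast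
        rw [hr, hx₀a]
        linear_combination (k:ℝ) * hza
      have hzh : (((z:ℝ) * r : ℝ) : Torus1) = 0 := by
        rw [hzr]
        exact (AddCircle.coe_eq_zero_iff (1:ℝ)).mpr ⟨k - z * round x₀, by simp⟩
      obtain ⟨n, hn⟩ := (AddCircle.coe_eq_zero_iff (1:ℝ)).mp hzh
      have hn' : (n:ℝ) = z * r := by simpa using hn
      have habs : |(n:ℝ)| < 1 := by
        rw [hn', abs_mul]
        calc |(z:ℝ)| * |r| < q * (1/(2*q)) := by
              apply mul_lt_mul_of_pos_left _ hqpos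
              rw [← hnorm]; exact hlt
          _ = 1/2 := by field_simp [mul_comm]
          _ < 1 := by norm_num
      have hn0 : n = 0 := by
        rw [← Int.cast_abs] at habs
        exact Int.abs_lt_one_iff.mp (by exact_mod_cast habs)
      have hr0 : r = 0 := by
        have : (z:ℝ) * r = 0 := by rw [← hn', hn0]; simp
        rcases mul_eq_zero.mp this with h' | h'
        · exact absurd h' (by exact_mod_cast hz0)
        · exact h'
      exact hne (by rw [← hrcoe, hr0]; simp)
    set U : Set Torus1 := ball 0 (1/(2*q)) with hU
    set V : Set Torus1 := {y | 1/(4*q) < dist y 0} with hV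
    have hUo : IsOpen U := isOpen_ball
    have hVo : IsOpen V := isOpen_lt continuous_const (continuous_id.dist continuous_const)
    have hcover : (H : Set Torus1) ⊆ U ∪ V := by
      intro y hy
      by_cases hy0 : y = 0
      · left; rw [hU, mem_ball, hy0, dist_self]; positivity
      · right
        have := hkill y hy hy0
        rw [hV, Set.mem_setOf_eq, dist_zero_right]
        calc 1/(4*q) < 1/(2*q) := by
              apply div_lt_div_of_pos_left one_pos (by positivity) (by linarith)
          _ ≤ ‖y‖ := this
    have hne1 : ((H : Set Torus1) ∩ U).Nonempty :=
      ⟨0, H.zero_mem, by rw [hU, mem_ball, dist_self]; positivity⟩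
    have hne2 : ((H : Set Torus1) ∩ V).Nonempty := by
      refine ⟨x, hxH, ?_⟩
      rw [hV, Set.mem_setOf_eq, dist_zero_right]
      calc 1/(4*q) < 1/(2*q) := by
            apply div_lt_div_of_pos_left one_pos (by positivity) (by linarith)
        _ ≤ ‖x‖ := hkill x hxH hx0
    obtain ⟨y, hyH, hyU, hyV⟩ := hconn U V hUo hVo hcover hne1 hne2
    have hy0 : y = 0 := by
      by_contra hne
      have := hkill y hyH hne
      rw [hU, mem_ball, dist_zero_right] at hyU
      linarith
    rw [hV, Set.mem_setOf_eq, hy0, dist_self] at hyV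
    have : (0:ℝ) < 1/(4*q) := by positivity
    linarith

private lemma st3_avoid_point (a : ℤ) :
    ∃ δ : ℝ, 0 < δ ∧ ∃ θ : Torus1,
      ∀ k : ℕ, δ ≤ dist ((((a:ℝ)/((k:ℝ)+1)) : ℝ) : Torus1) θ := by
  have hsq2 : (1.4:ℝ) ≤ Real.sqrt 2 := by
    nlinarith [Real.sq_sqrt (by norm_num : (0:ℝ) ≤ 2), Real.sqrt_nonneg 2]
  have hsq2' : Real.sqrt 2 < 1.5 := by
    nlinarith [Real.sq_sqrt (by norm_num : (0:ℝ) ≤ 2), Real.sqrt_nonneg 2]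
  set α : ℝ := Real.sqrt 2 / 4 with hα
  have hα_irr : Irrational α := by
    have := irrational_sqrt_two
    simpa [hα] using this.div_natCast (by norm_num : (4:ℕ) ≠ 0)
  have hα1 : (1/3 : ℝ) ≤ α := by rw [hα]; linarith
  have hα2 : α < 1/2 := by rw [hα]; linarith
  have hα0 : 0 ≤ α := by linarith
  set θ : Torus1 := (α : Torus1) with hθ
  set pt : ℕ → ℝ := fun k => (a:ℝ)/((k:ℝ)+1) with hpt
  set d : ℕ → ℝ := fun k => dist (((pt k : ℝ)) : Torus1) θ with hd
  have hdpos : ∀ k, 0 < d k := by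
    intro k
    rw [hd]
    simp only []
    rw [dist_pos]
    intro heq
    rw [hθ] at heq
    have h0 : ((pt k - α : ℝ) : Torus1) = 0 := by
      rw [AddCircle.coe_sub, heq, sub_self]
    obtain ⟨n, hn⟩ := (AddCircle.coe_eq_zero_iff (1:ℝ)).mp h0
    have hn' : (n:ℝ) = pt k - α := by simpa using hn
    apply hα_irr
    refine ⟨(a:ℚ)/((k:ℚ)+1) - (n:ℚ), ?_⟩
    push_cast
    rw [hpt] at hn'
    simp only [] at hn'
    linarith
  set M : ℕ := a.natAbs with hM
  have hlarge : ∀ k : ℕ, 8*M ≤ k → 1/5 ≤ d k := by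
    intro k hk
    have hk1 : (0:ℝ) < (k:ℝ)+1 := by positivity
    have habs : |pt k| ≤ 1/8 := by
      rw [hpt]
      simp only []
      rw [abs_div, abs_of_pos hk1]
      rcases Nat.eq_zero_or_pos M with hM0 | hM0
      · have : a = 0 := by rwa [← Int.natAbs_eq_zero]
        simp only [this, Int.cast_zero, zero_div, abs_zero]
        norm_num
      · have haM : |(a:ℝ)| = (M:ℝ) := by
          rw [hM, ← Int.cast_abs, Nat.cast_natAbs]
        rw [haM, div_le_div_iff₀ hk1 (by norm_num)]
        have : (8:ℝ)*M ≤ k := by exact_mod_cast hk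
        linarith
    have hnpt : ‖((pt k : ℝ) : Torus1)‖ ≤ 1/8 := by
      rw [AddCircle.norm_coe_eq_abs_iff 1 one_ne_zero |>.mpr
        (by simpa using le_trans habs (by norm_num))]
      exact habs
    have hnθ : (1/3:ℝ) ≤ ‖θ‖ := by
      rw [hθ, AddCircle.norm_coe_eq_abs_iff 1 one_ne_zero |>.mpr
        (by rw [abs_of_nonneg hα0]; simpa using hα2.le)]
      rw [abs_of_nonneg hα0]; exact hα1
    have htri : ‖θ‖ ≤ ‖((pt k : ℝ) : Torus1)‖ + d k := by
      rw [hd]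
      simp only []
      calc ‖θ‖ = dist θ (0:Torus1) := (dist_zero_right θ).symm
        _ ≤ dist θ (((pt k:ℝ)):Torus1) + dist (((pt k:ℝ)):Torus1) 0 := dist_triangle _ _ _
        _ = ‖((pt k:ℝ):Torus1)‖ + dist (((pt k:ℝ)):Torus1) θ := by
            rw [dist_comm θ, dist_zero_right]; ring
    linarith
  set δ : ℝ := min (1/5) ((Finset.range (8*M+1)).inf' ⟨0, by simp⟩ d) with hδdef
  refine ⟨δ, ?_, θ, ?_⟩
  · apply lt_min (by norm_num)
    exact (Finset.lt_inf'_iff _).mpr fun k _ => hdpos k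
  · intro k
    rcases le_or_gt k (8*M) with hk | hk
    · exact le_trans (min_le_right _ _)
        (Finset.inf'_le _ (Finset.mem_range.mpr (by omega)))
    · exact le_trans (min_le_left _ _) (hlarge k (by omega))

end Statement3Aux

/-- **Necessity of condition (a).** If the columns of the non-constant part `A_*(x)` are
`ℚ`-linearly dependent, then there is an infinite `X ⊆ 𝕋^N` such that for every subtorus
`𝒯` of `𝕋^L` there is an `ε > 0` such that no dilation `A(n) X` is `ε`-dense in any
translate of `𝒯`. -/

theorem statement3 (L N D : ℕ) (hL : 0 < L) (hN : 0 < N) (hD : 0 < D)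
    (A : Fin (D + 1) → Matrix (Fin L) (Fin N) ℤ)
    (m : Fin N → ℚ) (hm : m ≠ 0)
    (hdep : ∀ d : Fin (D + 1), d ≠ 0 → ((A d).map ((↑) : ℤ → ℚ)).mulVec m = 0) :
    ∃ X : Set (Fin N → Torus1), X.Infinite ∧
      ∀ T : AddSubgroup (Fin L → Torus1), IsSubtorus T →
        ∃ ε : ℝ, 0 < ε ∧ ∀ n : ℤ, ∀ t : Fin L → Torus1,
          ¬ EpsDenseIn (torusAct (evalMat A n) '' X) (translateOf t T) ε := by
  classical
  obtain ⟨m', ⟨j0, hj0⟩, hz⟩ := st3_exists_intvec m hm A hdep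
  set f : ℕ → (Fin N → Torus1) :=
    fun k => (fun j => (((m' j : ℝ)/((k:ℝ)+1) : ℝ) : Torus1)) with hf
  refine ⟨Set.range f, ?_, ?_⟩
  · exact st3_range_infinite m' j0 hj0
  · rintro T ⟨hTclosed, hTconn, hTbot⟩
    obtain ⟨aT, haT, ha0⟩ : ∃ aT, aT ∈ T ∧ aT ≠ 0 := by
      by_contra h
      push_neg at h
      exact hTbot ((AddSubgroup.eq_bot_iff_forall T).mpr fun x hx => h x hx)
    obtain ⟨i, hai⟩ := Function.ne_iff.mp ha0
    set H : AddSubgroup Torus1 := T.map (Pi.evalAddMonoidHom (fun _ : Fin L => Torus1) i) with hH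
    have hHset : (H : Set Torus1) = (fun y => y i) '' (T : Set (Fin L → Torus1)) := by
      rw [hH, AddSubgroup.coe_map]
      rfl
    have hHconn : IsPreconnected (H : Set Torus1) := by
      rw [hHset]
      exact (hTconn.image _ (continuous_apply i).continuousOn).isPreconnected
    have hHdense : Dense (H : Set Torus1) :=
      st3_dense_of_connected_subgroup H hHconn (aT i)
        (AddSubgroup.mem_map.mpr ⟨aT, haT, rfl⟩) (by simpa using hai)
    obtain ⟨δ, hδpos, θ, hθ⟩ := st3_avoid_point (∑ j, A 0 i j * m' j)
    refine ⟨δ/4, by positivity, ?_⟩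
    intro n t hdense
    have hcontL : Continuous (fun v : Torus1 => t i + v) := continuous_const.add continuous_id
    have hsurjL : Function.Surjective (fun v : Torus1 => t i + v) := fun y => ⟨y - t i, by show t i + (y - t i) = y; rw [add_comm]; exact sub_add_cancel y (t i)⟩
    have hd2 : Dense ((fun v : Torus1 => t i + v) '' (H : Set Torus1)) :=
      hsurjL.denseRange.dense_image hcontL hHdense
    obtain ⟨p, hp⟩ := Metric.dense_iff.mp hd2 θ (δ/4) (by positivity)
    obtain ⟨hpball, hpmem⟩ := hp
    obtain ⟨v, hvH, rfl⟩ := hpmem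
    rw [hHset] at hvH
    obtain ⟨h, hhT, rfl⟩ := hvH
    have hs : t + h ∈ translateOf t T := ⟨h, hhT, rfl⟩
    obtain ⟨y, hyY, hy⟩ := hdense (t + h) hs
    obtain ⟨x, hxX, hyx⟩ := hyY
    obtain ⟨k, rfl⟩ := hxX
    have hyk : y = fun i' => ((((∑ j, A 0 i' j * m' j : ℤ) : ℝ)/((k:ℝ)+1) : ℝ) : Torus1) := by
      rw [← hyx, hf]
      exact st3_key_eval A m' hz n k
    have h1 := hy i
    rw [hyk] at h1
    have h2 : dist ((t+h) i) θ < δ/4 := by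
      have hti : (t+h) i = t i + h i := rfl
      rw [hti]
      exact Metric.mem_ball.mp hpball
    have h3 := hθ k
    have h4 := dist_triangle
      (((((∑ j, A 0 i j * m' j : ℤ) : ℝ)/((k:ℝ)+1) : ℝ) : Torus1)) ((t+h) i) θ
    simp only [] at h1
    linarith
end

section
/- Let D and k be positive integers, let x_1, …, x_k be k distinct points of 𝕋 = ℝ/ℤ, and set H_m = Σ_{j=1}^m h_j where h_j = #{(i,i') : 1 ≤ i,i' ≤ k and j(x_i − x_{i'}) ∈ ℤ}. If s_2, s_3, … is a sequence of nonnegative integers such that the partial sums S_b = s_2 + ⋯ + s_b satisfy S_b ≤ H_b and S_b ≤ k² for every b ≥ 2, then Σ_{b=2}^∞ s_b · b^{-1/D} ≤ C(D) · k^{2 − 1/(2D)} for a constant C(D) depending only on D. -/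
open scoped BigOperators
open Matrix

/-- For distinct points `x 1, …, x k` of `𝕋`, the number `h_m` of pairs `(i, j)` with
`m (x i − x j) ∈ ℤ`, i.e. `m • (x i − x j) = 0` in `𝕋`. -/
noncomputable def hcount {k : ℕ} (x : Fin k → Torus1) (m : ℕ) : ℕ :=
  Nat.card {p : Fin k × Fin k // m • (x p.1 - x p.2) = 0}


lemma tele (g : ℕ → ℝ) : ∀ {n a : ℕ}, a ≤ n →
    ∑ m ∈ Finset.Ico a n, (g m - g (m + 1)) = g a - g n := by
  intro n
  induction n with
  | zero => intro a ha; interval_cases a; simp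
  | succ n ih =>
    intro a ha
    rcases Nat.lt_succ_iff_lt_or_eq.mp (Nat.lt_succ_of_le ha) with h | rfl
    · have h' : a ≤ n := Nat.lt_succ_iff.mp h
      rw [Finset.sum_Ico_succ_top h', ih h']
      ring
    · simp
  

lemma delta_le {D : ℕ} (hD : 0 < D) {m : ℕ} (hm : 2 ≤ m) :
    (m : ℝ) ^ (-(1 : ℝ) / D) - ((m : ℝ) + 1) ^ (-(1 : ℝ) / D) ≤
      (1 / D) * (m : ℝ) ^ (-(1 : ℝ) / D) / m := by
  set p : ℝ := 1 / (D : ℝ) with hp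
  have hD' : (1 : ℝ) ≤ (D : ℝ) := by exact_mod_cast hD
  have hp0 : 0 < p := by positivity
  have hp1 : p ≤ 1 := by rw [hp]; rw [div_le_one (by linarith)]; linarith
  have hmr : (2 : ℝ) ≤ (m : ℝ) := by exact_mod_cast hm
  have hm0 : (0 : ℝ) < m := by linarith
  have hneg : -(1 : ℝ) / (D : ℝ) = -p := by rw [hp]; ring
  rw [hneg]
  set t : ℝ := p / m with ht
  have ht0 : 0 ≤ t := by positivity
  have ht1 : t ≤ 1 / 2 := by
    rw [ht, div_le_div_iff₀ hm0 (by norm_num)]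
    nlinarith
  have h1 : ((m : ℝ) + 1) ^ p ≤ (m : ℝ) ^ p * (1 + t) := by
    have heq : (m : ℝ) + 1 = m * (1 + 1 / m) := by field_simp
    rw [heq, Real.mul_rpow (le_of_lt hm0) (by positivity)]
    have hinvm : (0:ℝ) ≤ 1 / (m:ℝ) := by positivity
    have hb : (1 + 1 / (m : ℝ)) ^ p ≤ 1 + p * (1 / (m:ℝ)) :=
      rpow_one_add_le_one_add_mul_self (by linarith) hp0.le hp1
    have : 1 + p * (1 / (m : ℝ)) = 1 + t := by rw [ht]; ring
    rw [this] at hb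
    exact mul_le_mul_of_nonneg_left hb (Real.rpow_nonneg hm0.le p)
  have key : (m : ℝ) ^ (-p) * (1 - t) ≤ ((m : ℝ) + 1) ^ (-p) := by
    have hinv : (1 : ℝ) - t ≤ (1 + t)⁻¹ := by
      rw [inv_eq_one_div, le_div_iff₀ (by linarith : (0:ℝ) < 1 + t)]
      nlinarith
    calc (m : ℝ) ^ (-p) * (1 - t) ≤ (m : ℝ) ^ (-p) * (1 + t)⁻¹ :=
          mul_le_mul_of_nonneg_left hinv (Real.rpow_nonneg hm0.le _)
      _ = ((m : ℝ) ^ p * (1 + t))⁻¹ := by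
          rw [Real.rpow_neg hm0.le, mul_inv]
      _ ≤ (((m : ℝ) + 1) ^ p)⁻¹ := by
          apply inv_anti₀ (by positivity) h1
      _ = ((m : ℝ) + 1) ^ (-p) := (Real.rpow_neg (by linarith) p).symm
  have : (1 / (D : ℝ)) * (m : ℝ) ^ (-p) / m = (m : ℝ) ^ (-p) * t := by
    rw [ht, hp]; ring
  rw [this]
  nlinarith [key]

lemma torsion_surj (j : ℕ) (hj : 0 < j) :
    ∃ f : Fin j → {y : Torus1 // j • y = 0}, Function.Surjective f := by
  have hj' : (j : ℝ) ≠ 0 := Nat.cast_ne_zero.mpr hj.ne'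
  refine ⟨fun m => ⟨((((m : ℕ) : ℝ) / (j : ℝ) : ℝ) : Torus1), ?_⟩, ?_⟩
  · rw [show (j : ℕ) • ((((m : ℕ) : ℝ) / (j : ℝ) : ℝ) : Torus1)
        = ((j • (((m : ℕ) : ℝ) / (j : ℝ)) : ℝ) : Torus1) from (AddCircle.coe_nsmul _).symm,
      AddCircle.coe_eq_zero_iff]
    exact ⟨(m : ℕ), by simp only [zsmul_eq_mul, nsmul_eq_mul, mul_one]; push_cast; field_simp⟩
  · rintro ⟨y, hy⟩
    obtain ⟨r, rfl⟩ := QuotientAddGroup.mk_surjective y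
    rw [show (j : ℕ) • ((r : ℝ) : Torus1) = ((j • r : ℝ) : Torus1)
        from (AddCircle.coe_nsmul _).symm, AddCircle.coe_eq_zero_iff] at hy
    obtain ⟨n, hn⟩ := hy
    have hn' : (n : ℝ) = j * r := by
      simpa [zsmul_eq_mul, nsmul_eq_mul] using hn
    have h0 : 0 ≤ n % j := Int.emod_nonneg n (by exact_mod_cast hj.ne')
    have hlt : n % j < j := Int.emod_lt_of_pos n (by exact_mod_cast hj)
    refine ⟨⟨(n % j).toNat, by omega⟩, Subtype.ext ?_⟩
    show ((((n % j).toNat : ℝ) / (j : ℝ) : ℝ) : Torus1) = (r : Torus1)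
    rw [← sub_eq_zero, ← AddCircle.coe_sub, AddCircle.coe_eq_zero_iff]
    refine ⟨-(n / j), ?_⟩
    have hcast : (((n % j).toNat : ℕ) : ℝ) = ((n % j : ℤ) : ℝ) := by
      exact_mod_cast congrArg (fun z : ℤ => (z : ℝ)) (Int.toNat_of_nonneg h0)
    have hmod : ((n % j : ℤ) : ℝ) = (n : ℝ) - (j : ℝ) * ((n / j : ℤ) : ℝ) := by
      rw [Int.emod_def]; push_cast; ring
    simp only [zsmul_eq_mul, mul_one]
    rw [hcast, hmod]
    field_simp
    push_cast
    linarith [hn']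

lemma hcount_le {k : ℕ} (x : Fin k → Torus1) (hx : Function.Injective x) {j : ℕ} (hj : 0 < j) :
    hcount x j ≤ j * k := by
  obtain ⟨f, hf⟩ := torsion_surj j hj
  haveI : Finite {y : Torus1 // j • y = 0} := Finite.of_surjective f hf
  have hcard : Nat.card {y : Torus1 // j • y = 0} ≤ j := by
    simpa using Nat.card_le_card_of_surjective f hf
  have hinj : Function.Injective
      (fun p : {p : Fin k × Fin k // j • (x p.1 - x p.2) = 0} =>
        ((p.1.1, ⟨x p.1.1 - x p.1.2, p.2⟩) : Fin k × {y : Torus1 // j • y = 0})) := by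
    rintro ⟨⟨a, b⟩, hp⟩ ⟨⟨c, d⟩, hq⟩ h
    simp only [Prod.mk.injEq, Subtype.mk.injEq] at h
    obtain ⟨h1, h2⟩ := h
    subst h1
    have : x b = x d := by
      have := sub_right_injective (G := Torus1) h2  -- x a - x b = x a - x d
      exact this
    exact Subtype.ext (Prod.ext rfl (hx this))
  calc hcount x j ≤ Nat.card (Fin k × {y : Torus1 // j • y = 0}) :=
        Nat.card_le_card_of_injective _ hinj
    _ = k * Nat.card {y : Torus1 // j • y = 0} := by simp [Nat.card_prod]
    _ ≤ k * j := Nat.mul_le_mul_left k hcard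
    _ = j * k := Nat.mul_comm _ _

lemma main_bound (D : ℕ) (hD : 0 < D) (k : ℕ) (hk : 0 < k) (s : ℕ → ℕ)
    (h1 : ∀ b : ℕ, 2 ≤ b → (∑ j ∈ Finset.Icc 2 b, (s j : ℝ)) ≤ (k : ℝ) * (b : ℝ) ^ 2)
    (h2 : ∀ b : ℕ, 2 ≤ b → (∑ j ∈ Finset.Icc 2 b, (s j : ℝ)) ≤ (k : ℝ) ^ 2)
    (N : ℕ) :
    ∑ b ∈ Finset.Icc 2 N, (s b : ℝ) * (b : ℝ) ^ (-(1 : ℝ) / D) ≤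
      (4 / D + 2) * (k : ℝ) ^ ((2 : ℝ) - 1 / (2 * (D : ℝ))) := by
  classical
  set q : ℝ := -(1 : ℝ) / D with hq
  set f : ℕ → ℝ := fun m => (m : ℝ) ^ q with hf
  set S : ℕ → ℝ := fun m => ∑ j ∈ Finset.Icc 2 m, (s j : ℝ) with hS
  have hD1 : (1 : ℝ) ≤ (D : ℝ) := by exact_mod_cast hD
  have hq0 : q ≤ 0 := by rw [hq]; apply div_nonpos_of_nonpos_of_nonneg <;> norm_num
  -- basic facts
  have hfpos : ∀ m : ℕ, 0 ≤ f m := fun m => Real.rpow_nonneg (Nat.cast_nonneg m) q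
  have hfanti : ∀ {a b : ℕ}, 0 < a → a ≤ b → f b ≤ f a := by
    intro a b ha hab
    exact Real.rpow_le_rpow_of_nonpos (by exact_mod_cast ha) (by exact_mod_cast hab) hq0
  have hSnonneg : ∀ m, 0 ≤ S m := fun m => Finset.sum_nonneg fun j _ => by positivity
  set m₀ : ℕ := Nat.sqrt k + 1 with hm₀
  have hsq1 : 1 ≤ Nat.sqrt k := Nat.le_sqrt.mpr (by omega)
  have hm₀2 : 2 ≤ m₀ := by omega
  -- reduce to N ≥ m₀
  set N' : ℕ := max N m₀ with hN'
  have hmono : ∑ b ∈ Finset.Icc 2 N, (s b : ℝ) * f b ≤ ∑ b ∈ Finset.Icc 2 N', (s b : ℝ) * f b := by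
    apply Finset.sum_le_sum_of_subset_of_nonneg
    · apply Finset.Icc_subset_Icc_right; exact le_max_left _ _
    · intro i _ _; have := hfpos i; positivity
  have hN₀ : m₀ ≤ N' := le_max_right _ _
  have hN2 : 2 ≤ N' := le_trans hm₀2 hN₀
  -- Abel summation
  have habel : ∑ b ∈ Finset.Icc 2 N', (s b : ℝ) * f b
      = f N' * S N' + ∑ m ∈ Finset.Ico 2 N', (f m - f (m + 1)) * S m := by
    have step1 : ∀ b ∈ Finset.Icc 2 N', (s b : ℝ) * f b
        = (s b : ℝ) * f N' + ∑ m ∈ Finset.Ico b N', (s b : ℝ) * (f m - f (m + 1)) := by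
      intro b hb
      rw [Finset.mem_Icc] at hb
      rw [← Finset.mul_sum, tele f hb.2]
      ring
    rw [Finset.sum_congr rfl step1, Finset.sum_add_distrib]
    congr 1
    · simp only [hS, Finset.mul_sum]
      exact Finset.sum_congr rfl fun b _ => by ring
    · rw [Finset.sum_comm' (t' := Finset.Ico 2 N') (s' := fun m => Finset.Icc 2 m)
        (by intro b m; simp only [Finset.mem_Icc, Finset.mem_Ico]; omega)]
      apply Finset.sum_congr rfl
      intro m _
      simp only [hS, Finset.mul_sum]
      exact Finset.sum_congr rfl fun b _ => by ring
  -- pieces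
  have hsplit : ∑ m ∈ Finset.Ico 2 N', (f m - f (m + 1)) * S m
      = ∑ m ∈ Finset.Ico 2 m₀, (f m - f (m + 1)) * S m
        + ∑ m ∈ Finset.Ico m₀ N', (f m - f (m + 1)) * S m :=
    (Finset.sum_Ico_consecutive _ hm₀2 hN₀).symm
  -- real sqrt facts
  have hsqk : Real.sqrt k = (k : ℝ) ^ ((1:ℝ)/2) := Real.sqrt_eq_rpow _
  have hsqrt_pos : (0:ℝ) < Real.sqrt k := Real.sqrt_pos.mpr (by exact_mod_cast hk)
  have hm₀_le : (m₀ : ℝ) ≤ 2 * Real.sqrt k := by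
    have h1 : ((Nat.sqrt k : ℕ) : ℝ) ≤ Real.sqrt k := Real.nat_sqrt_le_real_sqrt
    have h2 : (1 : ℝ) ≤ ((Nat.sqrt k : ℕ) : ℝ) := by exact_mod_cast hsq1
    push_cast [hm₀]
    linarith
  have hm₀_ge : Real.sqrt k ≤ (m₀ : ℝ) := by
    have := Real.real_sqrt_lt_nat_sqrt_succ (a := k)
    push_cast [hm₀]
    push_cast at this
    linarith
  -- bound K := k ^ (2 - 1/(2D))
  set K : ℝ := (k : ℝ) ^ ((2 : ℝ) - 1 / (2 * (D : ℝ))) with hK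
  have hk0 : (0:ℝ) < k := by exact_mod_cast hk
  -- Part B and tail: k^2 * f m₀ ≤ K
  have hfm₀ : f m₀ ≤ (k : ℝ) ^ (-(1:ℝ)/(2*D)) := by
    have h1 : f m₀ ≤ (Real.sqrt k) ^ q := by
      exact Real.rpow_le_rpow_of_nonpos hsqrt_pos hm₀_ge hq0
    have h2 : (Real.sqrt k) ^ q = (k:ℝ) ^ ((1:ℝ)/2 * q) := by
      rw [hsqk, ← Real.rpow_mul (le_of_lt hk0)]
    have h3 : (1:ℝ)/2 * q = -(1:ℝ)/(2*D) := by rw [hq]; ring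
    rw [h2, h3] at h1
    exact h1
  have htailB : (k:ℝ)^2 * f m₀ ≤ K := by
    have : (k:ℝ)^2 * (k:ℝ) ^ (-(1:ℝ)/(2*D)) = K := by
      have h2' : (k:ℝ) ^ ((2:ℝ)) = (k:ℝ)^2 := by
        rw [show ((2:ℝ)) = ((2:ℕ):ℝ) by norm_num, Real.rpow_natCast]
      rw [hK, show (2:ℝ) - 1/(2*(D:ℝ)) = 2 + (-(1:ℝ)/(2*(D:ℝ))) by ring,
        Real.rpow_add hk0, h2']
    calc (k:ℝ)^2 * f m₀ ≤ (k:ℝ)^2 * ((k:ℝ) ^ (-(1:ℝ)/(2*D))) := by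
          apply mul_le_mul_of_nonneg_left hfm₀ (by positivity)
      _ = K := this
  -- leftover term
  have hleft : f N' * S N' ≤ K := by
    calc f N' * S N' ≤ f m₀ * (k:ℝ)^2 := by
          apply mul_le_mul (hfanti (by omega) hN₀) (h2 N' hN2) (hSnonneg N') (hfpos m₀)
      _ = (k:ℝ)^2 * f m₀ := by ring
      _ ≤ K := htailB
  -- Part B
  have hpartB : ∑ m ∈ Finset.Ico m₀ N', (f m - f (m + 1)) * S m ≤ K := by
    have hstep : ∀ m ∈ Finset.Ico m₀ N', (f m - f (m + 1)) * S m
        ≤ (f m - f (m + 1)) * (k:ℝ)^2 := by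
      intro m hm
      rw [Finset.mem_Ico] at hm
      have hd : 0 ≤ f m - f (m+1) := by
        have := hfanti (a := m) (b := m+1) (by omega) (by omega)
        linarith
      apply mul_le_mul_of_nonneg_left (h2 m (by omega)) hd
    calc ∑ m ∈ Finset.Ico m₀ N', (f m - f (m + 1)) * S m
        ≤ ∑ m ∈ Finset.Ico m₀ N', (f m - f (m + 1)) * (k:ℝ)^2 := Finset.sum_le_sum hstep
      _ = (f m₀ - f N') * (k:ℝ)^2 := by rw [← Finset.sum_mul, tele f hN₀]
      _ ≤ f m₀ * (k:ℝ)^2 := by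
          have := hfpos N'; nlinarith
      _ = (k:ℝ)^2 * f m₀ := by ring
      _ ≤ K := htailB
  -- Part A
  have hpartA : ∑ m ∈ Finset.Ico 2 m₀, (f m - f (m + 1)) * S m ≤ (4 / D) * K := by
    have hstep : ∀ m ∈ Finset.Ico 2 m₀, (f m - f (m + 1)) * S m
        ≤ (k:ℝ) * (1/D) * (m:ℝ) ^ ((1:ℝ) + q) := by
      intro m hm
      rw [Finset.mem_Ico] at hm
      have hm2 : 2 ≤ m := hm.1
      have hmr : (2:ℝ) ≤ m := by exact_mod_cast hm2
      have hd : 0 ≤ f m - f (m+1) := by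
        have := hfanti (a := m) (b := m+1) (by omega) (by omega)
        linarith
      have hdel : f m - f (m+1) ≤ (1/D) * f m / m := by
        have h := delta_le hD hm2
        simp only [hf, hq]
        push_cast
        exact h
      calc (f m - f (m + 1)) * S m ≤ ((1/D) * f m / m) * ((k:ℝ) * (m:ℝ)^2) := by
            apply mul_le_mul hdel (h1 m hm2) (hSnonneg m) (by positivity)
        _ = (k:ℝ) * (1/D) * (f m * (m:ℝ)) := by
            field_simp
        _ = (k:ℝ) * (1/D) * (m:ℝ) ^ ((1:ℝ) + q) := by
            rw [hf]
            rw [Real.rpow_add (by positivity : (0:ℝ) < (m:ℝ)), Real.rpow_one]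
            ring
    have hexp : (0:ℝ) ≤ 1 + q := by
      rw [hq]
      have : (1:ℝ)/D ≤ 1 := by
        rw [div_le_one (by linarith)]; exact hD1
      have h := this
      rw [neg_div]
      linarith
    have hmono2 : ∀ m ∈ Finset.Ico 2 m₀, (k:ℝ) * (1/D) * (m:ℝ) ^ ((1:ℝ) + q)
        ≤ (k:ℝ) * (1/D) * (m₀:ℝ) ^ ((1:ℝ) + q) := by
      intro m hm
      rw [Finset.mem_Ico] at hm
      apply mul_le_mul_of_nonneg_left _ (by positivity)
      apply Real.rpow_le_rpow (by positivity) (by exact_mod_cast hm.2.le) hexp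
    have hcard : (Finset.Ico 2 m₀).card ≤ m₀ := by
      rw [Nat.card_Ico]; omega
    calc ∑ m ∈ Finset.Ico 2 m₀, (f m - f (m + 1)) * S m
        ≤ ∑ m ∈ Finset.Ico 2 m₀, (k:ℝ) * (1/D) * (m₀:ℝ) ^ ((1:ℝ) + q) :=
          Finset.sum_le_sum (fun m hm => le_trans (hstep m hm) (hmono2 m hm))
      _ = (Finset.Ico 2 m₀).card * ((k:ℝ) * (1/D) * (m₀:ℝ) ^ ((1:ℝ) + q)) := by
          rw [Finset.sum_const, nsmul_eq_mul]
      _ ≤ (m₀:ℝ) * ((k:ℝ) * (1/D) * (m₀:ℝ) ^ ((1:ℝ) + q)) := by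
          apply mul_le_mul_of_nonneg_right (by exact_mod_cast hcard) (by positivity)
      _ = (k:ℝ) * (1/D) * ((m₀:ℝ) * (m₀:ℝ) ^ ((1:ℝ) + q)) := by ring
      _ = (k:ℝ) * (1/D) * (m₀:ℝ) ^ ((2:ℝ) + q) := by
          have hpow : (m₀:ℝ) * (m₀:ℝ) ^ ((1:ℝ) + q) = (m₀:ℝ) ^ ((2:ℝ) + q) := by
            rw [show (2:ℝ) + q = 1 + (1 + q) by ring,
              Real.rpow_add (by positivity : (0:ℝ) < (m₀:ℝ)) 1 (1+q), Real.rpow_one]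
          rw [hpow]
      _ ≤ (4 / D) * K := by
          have hexp2 : (0:ℝ) ≤ 2 + q := by linarith
          have hb1 : (m₀:ℝ) ^ ((2:ℝ) + q) ≤ (2 * Real.sqrt k) ^ ((2:ℝ) + q) :=
            Real.rpow_le_rpow (by positivity) hm₀_le hexp2
          have hb2 : (2 * Real.sqrt k) ^ ((2:ℝ) + q)
              = 2 ^ ((2:ℝ)+q) * ((k:ℝ) ^ ((1:ℝ)/2)) ^ ((2:ℝ)+q) := by
            rw [Real.mul_rpow (by norm_num) (le_of_lt hsqrt_pos), hsqk]
          have hb3 : ((k:ℝ) ^ ((1:ℝ)/2)) ^ ((2:ℝ)+q) = (k:ℝ) ^ ((1:ℝ) + q/2) := by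
            rw [← Real.rpow_mul (le_of_lt hk0)]
            congr 1
            ring
          have hb4 : (2:ℝ) ^ ((2:ℝ)+q) ≤ 4 := by
            calc (2:ℝ) ^ ((2:ℝ)+q) ≤ 2 ^ (2:ℝ) :=
                  Real.rpow_le_rpow_of_exponent_le (by norm_num) (by linarith [hq0])
              _ = 4 := by
                  rw [show (2:ℝ) = ((2:ℕ):ℝ) by norm_num, Real.rpow_natCast]
                  norm_num
          have hb5 : (k:ℝ) * (k:ℝ) ^ ((1:ℝ) + q/2) = K := by
            have hD0 : (D:ℝ) ≠ 0 := by positivity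
            rw [hK, show (2:ℝ) - 1/(2*(D:ℝ)) = 1 + (1 + q/2) by
              rw [hq]; field_simp; ring]
            rw [Real.rpow_add hk0 1 (1 + q/2), Real.rpow_one]
          calc (k:ℝ) * (1/D) * (m₀:ℝ) ^ ((2:ℝ) + q)
              ≤ (k:ℝ) * (1/D) * (2 ^ ((2:ℝ)+q) * (k:ℝ) ^ ((1:ℝ) + q/2)) := by
                apply mul_le_mul_of_nonneg_left _ (by positivity)
                rw [hb2, hb3] at hb1
                exact hb1
            _ ≤ (k:ℝ) * (1/D) * (4 * (k:ℝ) ^ ((1:ℝ) + q/2)) := by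
                apply mul_le_mul_of_nonneg_left _ (by positivity)
                apply mul_le_mul_of_nonneg_right hb4 (by positivity)
            _ = (4 / D) * ((k:ℝ) * (k:ℝ) ^ ((1:ℝ) + q/2)) := by ring
            _ = (4 / D) * K := by rw [hb5]
  -- combine
  have hKpos : 0 ≤ K := by positivity
  calc ∑ b ∈ Finset.Icc 2 N, (s b : ℝ) * f b
      ≤ ∑ b ∈ Finset.Icc 2 N', (s b : ℝ) * f b := hmono
    _ = f N' * S N' + ∑ m ∈ Finset.Ico 2 N', (f m - f (m + 1)) * S m := habel
    _ ≤ K + ((4 / D) * K + K) := by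
        rw [hsplit]
        have := add_le_add hleft (add_le_add hpartA hpartB)
        linarith
    _ ≤ (4 / D + 2) * K := by ring_nf; linarith

/-- **Corollary 1.** If `s₂, s₃, …` are nonnegative integers whose partial sums
`S_b = s₂ + ⋯ + s_b` satisfy `S_b ≤ H_b` and `S_b ≤ k²` for all `b ≥ 2`, then
`∑_{b ≥ 2} s_b b^{-1/D} ≤ C(D) k^{2 - 1/(2D)}` for a constant `C(D)` depending only
on `D`. -/
theorem statement8 (D : ℕ) (hD : 0 < D) :
    ∃ C : ℝ, 0 < C ∧
      ∀ (k : ℕ), 0 < k → ∀ (x : Fin k → Torus1), Function.Injective x →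
        ∀ s : ℕ → ℕ,
          (∀ b : ℕ, 2 ≤ b → (∑ j ∈ Finset.Icc 2 b, s j) ≤ ∑ j ∈ Finset.Icc 1 b, hcount x j) →
          (∀ b : ℕ, 2 ≤ b → (∑ j ∈ Finset.Icc 2 b, s j) ≤ k ^ 2) →
          (∑' b : ℕ, (if 2 ≤ b then (s b : ℝ) * (b : ℝ) ^ (-(1 : ℝ) / (D : ℝ)) else 0)) ≤
            C * (k : ℝ) ^ ((2 : ℝ) - 1 / (2 * (D : ℝ))) := by
  classical
  have hD1 : (1:ℝ) ≤ (D:ℝ) := by exact_mod_cast hD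
  refine ⟨4 / (D:ℝ) + 2, by positivity, ?_⟩
  intro k hk x hx s hH hK2
  have h1 : ∀ b : ℕ, 2 ≤ b → (∑ j ∈ Finset.Icc 2 b, (s j : ℝ)) ≤ (k:ℝ) * (b:ℝ)^2 := by
    intro b hb
    have hcard : (Finset.Icc 1 b).card = b := by rw [Nat.card_Icc]; omega
    have hnat : (∑ j ∈ Finset.Icc 2 b, s j) ≤ b * (b * k) := by
      calc ∑ j ∈ Finset.Icc 2 b, s j ≤ ∑ j ∈ Finset.Icc 1 b, hcount x j := hH b hb
        _ ≤ ∑ _j ∈ Finset.Icc 1 b, (b * k) := by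
            apply Finset.sum_le_sum
            intro j hj
            rw [Finset.mem_Icc] at hj
            calc hcount x j ≤ j * k := hcount_le x hx hj.1
              _ ≤ b * k := Nat.mul_le_mul_right k hj.2
        _ = (Finset.Icc 1 b).card * (b * k) := by rw [Finset.sum_const, smul_eq_mul]
        _ = b * (b * k) := by rw [hcard]
    have hr : ((∑ j ∈ Finset.Icc 2 b, s j : ℕ) : ℝ) ≤ ((b * (b * k) : ℕ) : ℝ) :=
      Nat.cast_le.mpr hnat
    push_cast at hr
    nlinarith [hr]
  have h2 : ∀ b : ℕ, 2 ≤ b → (∑ j ∈ Finset.Icc 2 b, (s j : ℝ)) ≤ (k:ℝ)^2 := by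
    intro b hb
    have hr : ((∑ j ∈ Finset.Icc 2 b, s j : ℕ) : ℝ) ≤ ((k ^ 2 : ℕ) : ℝ) :=
      Nat.cast_le.mpr (hK2 b hb)
    push_cast at hr
    exact hr
  apply Real.tsum_le_of_sum_range_le
  · intro n
    by_cases h : 2 ≤ n <;> simp only [h, if_true, if_false] <;> positivity
  · intro n
    rw [← Finset.sum_filter]
    have hfil : (Finset.range n).filter (fun b => 2 ≤ b) = Finset.Icc 2 (n - 1) := by
      ext b
      simp only [Finset.mem_filter, Finset.mem_range, Finset.mem_Icc]
      omega
    rw [hfil]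
    exact main_bound D hD k hk s h1 h2 (n - 1)
end

section
/- Let 0 < ε ≤ 1/2 and let ξ_1, …, ξ_k ∈ ℝ^ℓ be such that ‖ξ_i‖ ≥ ε for every i = 1, …, k, where ‖ξ‖ denotes the distance from ξ to the nearest point of ℤ^ℓ in the sup norm. Then k/3 ≤ Σ_{m ∈ ℤ^ℓ, 0 < ‖m‖_∞ ≤ ⌊ℓ/ε⌋} | Σ_{i=1}^k exp(2πi m·ξ_i) |. -/
open scoped BigOperators
open Matrix

/-- The finite set of frequencies `m ∈ ℤ^ℓ` with `0 < ‖m‖_∞ ≤ M`. -/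
noncomputable def freqBox (l M : ℕ) : Finset (Fin l → ℤ) :=
  (Finset.Icc (fun _ : Fin l => -(M : ℤ)) (fun _ : Fin l => (M : ℤ))).filter (· ≠ 0)

section BMVproof
open Finset

set_option maxHeartbeats 2000000

noncomputable def ee (t : ℝ) : ℂ := Complex.exp (2 * Real.pi * Complex.I * t)

lemma ee_add (s t : ℝ) : ee (s + t) = ee s * ee t := by
  unfold ee
  rw [← Complex.exp_add]
  push_cast
  ring_nf

lemma ee_zero : ee 0 = 1 := by simp [ee]

lemma ee_norm (t : ℝ) : ‖ee t‖ = 1 := by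
  unfold ee
  have : 2 * (Real.pi : ℂ) * Complex.I * t = ((2 * Real.pi * t : ℝ) : ℂ) * Complex.I := by
    push_cast; ring
  rw [this, Complex.norm_exp_ofReal_mul_I]

lemma ee_conj (t : ℝ) : (starRingEnd ℂ) (ee t) = ee (-t) := by
  unfold ee
  rw [← Complex.exp_conj]
  congr 1
  simp only [_root_.map_mul, Complex.conj_I, Complex.conj_ofReal, map_ofNat]
  push_cast
  ring

lemma ee_sum {α : Type*} (s : Finset α) (f : α → ℝ) :
    ee (∑ a ∈ s, f a) = ∏ a ∈ s, ee (f a) := by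
  unfold ee
  rw [← Complex.exp_sum]
  congr 1
  push_cast
  rw [Finset.mul_sum]

noncomputable def GG (m : ℕ) (t : ℝ) : ℂ := ∑ n ∈ Finset.range (m + 1), ee (n * t)

def w2 (m : ℕ) (n : ℤ) : ℕ :=
  ((Finset.range (m + 1) ×ˢ Finset.range (m + 1)).filter
    (fun p => (p.1 : ℤ) - (p.2 : ℤ) = n)).card

noncomputable def w4 (m : ℕ) (n : ℤ) : ℕ :=
  ((Finset.Icc (-(m : ℤ)) m ×ˢ Finset.Icc (-(m : ℤ)) m).filter
    (fun p => p.1 + p.2 = n)).sum (fun p => w2 m p.1 * w2 m p.2)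

lemma w2_neg (m : ℕ) (n : ℤ) : w2 m (-n) = w2 m n := by
  unfold w2
  refine Finset.card_nbij' (fun p => (p.2, p.1)) (fun p => (p.2, p.1)) ?_ ?_ ?_ ?_
  · intro a ha; simp only [Finset.mem_filter, Finset.mem_product, Finset.mem_range,
      Finset.mem_coe] at ha ⊢; omega
  · intro a ha; simp only [Finset.mem_filter, Finset.mem_product, Finset.mem_range,
      Finset.mem_coe] at ha ⊢; omega
  · intro a _; rfl
  · intro a _; rfl

lemma w2_coe (m d : ℕ) : w2 m (d : ℤ) = m + 1 - d := by
  unfold w2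
  rw [← Finset.card_range (m + 1 - d)]
  refine Finset.card_nbij' (fun p => p.2) (fun r => (r + d, r)) ?_ ?_ ?_ ?_
  · intro a ha; simp only [Finset.mem_filter, Finset.mem_product, Finset.mem_range,
      Finset.mem_coe] at ha ⊢; omega
  · intro a ha; simp only [Finset.mem_filter, Finset.mem_product, Finset.mem_range,
      Finset.mem_coe] at ha ⊢; omega
  · intro a ha; simp only [Finset.mem_coe, Finset.mem_filter, Finset.mem_product,
      Finset.mem_range] at ha
    have : a.1 = a.2 + d := by omega
    ext <;> simp [this]
  · intro a _; rfl

lemma w2_eq (m : ℕ) (n : ℤ) : w2 m n = m + 1 - n.natAbs := by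
  rcases Int.natAbs_eq n with h | h
  · rw [h, w2_coe, Int.natAbs_natCast]
  · rw [h, w2_neg, w2_coe]
    omega

lemma w2_zero (m : ℕ) : w2 m 0 = m + 1 := by simp [w2_eq]

lemma w2_le (m : ℕ) (n : ℤ) : w2 m n ≤ m + 1 := by rw [w2_eq]; omega

lemma icc_succ_eq (m : ℕ) :
    Finset.Icc (-((m : ℤ) + 1)) ((m : ℤ) + 1) =
      insert (-((m : ℤ) + 1)) (insert (((m : ℤ) + 1)) (Finset.Icc (-(m : ℤ)) m)) := by
  ext x
  simp only [Finset.mem_Icc, Finset.mem_insert]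
  omega

lemma card_icc_int (m : ℕ) : (Finset.Icc (-(m : ℤ)) m).card = 2 * m + 1 := by
  rw [Int.card_Icc]
  omega

lemma w2_succ (m : ℕ) : ∀ n ∈ Finset.Icc (-(m : ℤ)) m, w2 (m + 1) n = w2 m n + 1 := by
  intro n hn
  simp only [Finset.mem_Icc] at hn
  rw [w2_eq, w2_eq]
  omega

lemma sum_w2 (m : ℕ) : ∑ n ∈ Finset.Icc (-(m : ℤ)) m, w2 m n = (m + 1) ^ 2 := by
  induction m with
  | zero => simp [w2_zero]
  | succ m ih =>
    have h2 : ((m : ℤ) + 1) ∉ Finset.Icc (-(m : ℤ)) m := by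
      simp only [Finset.mem_Icc]; omega
    have h3 : (-((m : ℤ) + 1)) ∉ insert (((m : ℤ) + 1)) (Finset.Icc (-(m : ℤ)) m) := by
      simp only [Finset.mem_insert, Finset.mem_Icc]; omega
    push_cast
    rw [icc_succ_eq m, Finset.sum_insert h3, Finset.sum_insert h2]
    have hb1 : w2 (m + 1) (-((m : ℤ) + 1)) = 1 := by rw [w2_eq]; omega
    have hb2 : w2 (m + 1) (((m : ℤ) + 1)) = 1 := by rw [w2_eq]; omega
    rw [hb1, hb2, Finset.sum_congr rfl (w2_succ m), Finset.sum_add_distrib, ih,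
      Finset.sum_const, card_icc_int]
    ring

lemma sum_w2_sq (m : ℕ) :
    3 * ∑ n ∈ Finset.Icc (-(m : ℤ)) m, (w2 m n) ^ 2 = (m + 1) * (2 * (m + 1) ^ 2 + 1) := by
  induction m with
  | zero => simp [w2_zero]
  | succ m ih =>
    have h2 : ((m : ℤ) + 1) ∉ Finset.Icc (-(m : ℤ)) m := by
      simp only [Finset.mem_Icc]; omega
    have h3 : (-((m : ℤ) + 1)) ∉ insert (((m : ℤ) + 1)) (Finset.Icc (-(m : ℤ)) m) := by
      simp only [Finset.mem_insert, Finset.mem_Icc]; omega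
    push_cast
    rw [icc_succ_eq m, Finset.sum_insert h3, Finset.sum_insert h2]
    have hb1 : w2 (m + 1) (-((m : ℤ) + 1)) = 1 := by rw [w2_eq]; omega
    have hb2 : w2 (m + 1) (((m : ℤ) + 1)) = 1 := by rw [w2_eq]; omega
    have hptw : ∀ n ∈ Finset.Icc (-(m : ℤ)) m,
        (w2 (m + 1) n) ^ 2 = (w2 m n) ^ 2 + (2 * w2 m n + 1) := by
      intro n hn
      rw [w2_succ m n hn]
      ring
    rw [hb1, hb2, Finset.sum_congr rfl hptw, Finset.sum_add_distrib, Finset.sum_add_distrib,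
      ← Finset.mul_sum, sum_w2, Finset.sum_const, card_icc_int]
    simp only [smul_eq_mul, mul_one]
    zify at ih ⊢
    linear_combination ih

lemma w4_zero (m : ℕ) : w4 m 0 = ∑ n ∈ Finset.Icc (-(m : ℤ)) m, (w2 m n) ^ 2 := by
  unfold w4
  refine Finset.sum_nbij' (fun p => p.1) (fun a => (a, -a)) ?_ ?_ ?_ ?_ ?_
  · intro a ha; simp only [Finset.mem_filter, Finset.mem_product, Finset.mem_Icc,
      Finset.mem_coe] at ha ⊢; omega
  · intro a ha; simp only [Finset.mem_filter, Finset.mem_product, Finset.mem_Icc,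
      Finset.mem_coe] at ha ⊢; omega
  · intro a ha; simp only [Finset.mem_coe, Finset.mem_filter, Finset.mem_product,
      Finset.mem_Icc] at ha
    have : a.2 = -a.1 := by omega
    ext <;> simp [this]
  · intro a _; rfl
  · intro p hp
    simp only [Finset.mem_filter, Finset.mem_product, Finset.mem_Icc] at hp
    have h : p.2 = -p.1 := by omega
    rw [h, w2_neg]
    ring

lemma w4_le (m : ℕ) (n : ℤ) : w4 m n ≤ w4 m 0 := by
  have key : 2 * w4 m n ≤ 2 * w4 m 0 := by
    rw [w4_zero]
    unfold w4
    rw [Finset.mul_sum]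
    set T := ((Finset.Icc (-(m : ℤ)) m ×ˢ Finset.Icc (-(m : ℤ)) m).filter
      (fun p => p.1 + p.2 = n)) with hT
    have hsub1 : T.image Prod.fst ⊆ Finset.Icc (-(m : ℤ)) m := by
      intro a ha
      simp only [hT, Finset.mem_image, Finset.mem_filter, Finset.mem_product,
        Finset.mem_Icc] at ha
      obtain ⟨p, hp, rfl⟩ := ha
      simp only [Finset.mem_Icc]; omega
    have hsub2 : T.image Prod.snd ⊆ Finset.Icc (-(m : ℤ)) m := by
      intro a ha
      simp only [hT, Finset.mem_image, Finset.mem_filter, Finset.mem_product,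
        Finset.mem_Icc] at ha
      obtain ⟨p, hp, rfl⟩ := ha
      simp only [Finset.mem_Icc]; omega
    have hinj1 : ∀ x ∈ T, ∀ y ∈ T, x.1 = y.1 → x = y := by
      intro x hx y hy hxy
      simp only [hT, Finset.mem_filter, Finset.mem_product, Finset.mem_Icc] at hx hy
      exact Prod.ext hxy (by omega)
    have hinj2 : ∀ x ∈ T, ∀ y ∈ T, x.2 = y.2 → x = y := by
      intro x hx y hy hxy
      simp only [hT, Finset.mem_filter, Finset.mem_product, Finset.mem_Icc] at hx hy
      exact Prod.ext (by omega) hxy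
    calc ∑ p ∈ T, 2 * (w2 m p.1 * w2 m p.2)
        ≤ ∑ p ∈ T, ((w2 m p.1) ^ 2 + (w2 m p.2) ^ 2) := by
          apply Finset.sum_le_sum
          intro p _
          zify
          nlinarith [sq_nonneg ((w2 m p.1 : ℤ) - (w2 m p.2 : ℤ))]
      _ = (∑ a ∈ T.image Prod.fst, (w2 m a) ^ 2) + (∑ a ∈ T.image Prod.snd, (w2 m a) ^ 2) := by
          rw [Finset.sum_add_distrib, Finset.sum_image hinj1, Finset.sum_image hinj2]
      _ ≤ (∑ a ∈ Finset.Icc (-(m : ℤ)) m, (w2 m a) ^ 2)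
            + (∑ a ∈ Finset.Icc (-(m : ℤ)) m, (w2 m a) ^ 2) := by
          exact add_le_add (Finset.sum_le_sum_of_subset hsub1)
            (Finset.sum_le_sum_of_subset hsub2)
      _ = 2 * ∑ a ∈ Finset.Icc (-(m : ℤ)) m, (w2 m a) ^ 2 := by ring
  omega

lemma w4_zero_val (m : ℕ) : 3 * w4 m 0 = (m + 1) * (2 * (m + 1) ^ 2 + 1) := by
  rw [w4_zero]; exact sum_w2_sq m

lemma w4_pos (m : ℕ) : 0 < w4 m 0 := by
  have h := w4_zero_val m
  nlinarith [Nat.zero_le m]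

lemma ee_nat_pow (n : ℕ) (t : ℝ) : ee (n * t) = (ee t) ^ n := by
  unfold ee
  rw [← Complex.exp_nat_mul]
  congr 1
  push_cast
  ring


lemma normSq_GG_expand (m K : ℕ) (hmK : m ≤ K) (t : ℝ) :
    ((Complex.normSq (GG m t) : ℝ) : ℂ) =
      ∑ n ∈ Finset.Icc (-(K : ℤ)) K, (w2 m n : ℂ) * ee (n * t) := by
  have h1 : ((Complex.normSq (GG m t) : ℝ) : ℂ) = GG m t * (starRingEnd ℂ) (GG m t) :=
    (Complex.mul_conj _).symm
  have h2 : (starRingEnd ℂ) (GG m t) = ∑ b ∈ Finset.range (m + 1), ee (-(b * t)) := by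
    unfold GG
    rw [map_sum]
    exact Finset.sum_congr rfl fun b _ => ee_conj _
  rw [h1, h2]
  unfold GG
  rw [Finset.sum_mul_sum]
  rw [← Finset.sum_product']
  rw [← Finset.sum_fiberwise_of_maps_to
    (g := fun p : ℕ × ℕ => (p.1 : ℤ) - (p.2 : ℤ)) (t := Finset.Icc (-(K : ℤ)) K) ?_]
  · apply Finset.sum_congr rfl
    intro n _
    have : ∀ p ∈ (Finset.range (m + 1) ×ˢ Finset.range (m + 1)).filter
        (fun p : ℕ × ℕ => (p.1 : ℤ) - (p.2 : ℤ) = n),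
        ee (p.1 * t) * ee (-(p.2 * t)) = ee (n * t) := by
      intro p hp
      simp only [Finset.mem_filter] at hp
      rw [← ee_add]
      congr 1
      have := hp.2
      have hcast : ((p.1 : ℝ) - (p.2 : ℝ)) = (n : ℝ) := by
        exact_mod_cast congrArg (fun z : ℤ => (z : ℝ)) this
      push_cast
      linear_combination t * hcast
    rw [Finset.sum_congr rfl this, Finset.sum_const, w2]
    simp [nsmul_eq_mul, mul_comm]
  · intro p hp
    simp only [Finset.mem_product, Finset.mem_range] at hp
    simp only [Finset.mem_Icc]
    omega

lemma normSq_sq_GG_expand (m K : ℕ) (hmK : 2 * m ≤ K) (t : ℝ) :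
    (((Complex.normSq (GG m t)) ^ 2 : ℝ) : ℂ) =
      ∑ n ∈ Finset.Icc (-(K : ℤ)) K, (w4 m n : ℂ) * ee (n * t) := by
  have e1 := normSq_GG_expand m m le_rfl t
  have h0 : (((Complex.normSq (GG m t)) ^ 2 : ℝ) : ℂ) =
      ((Complex.normSq (GG m t) : ℝ) : ℂ) * ((Complex.normSq (GG m t) : ℝ) : ℂ) := by
    push_cast; ring
  rw [h0, e1, Finset.sum_mul_sum, ← Finset.sum_product']
  rw [← Finset.sum_fiberwise_of_maps_to
    (g := fun p : ℤ × ℤ => p.1 + p.2) (t := Finset.Icc (-(K : ℤ)) K) ?_]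
  · apply Finset.sum_congr rfl
    intro n _
    have hterm : ∀ p ∈ (Finset.Icc (-(m : ℤ)) m ×ˢ Finset.Icc (-(m : ℤ)) m).filter
        (fun p : ℤ × ℤ => p.1 + p.2 = n),
        ((w2 m p.1 : ℂ) * ee (p.1 * t)) * ((w2 m p.2 : ℂ) * ee (p.2 * t)) =
          ((w2 m p.1 * w2 m p.2 : ℕ) : ℂ) * ee (n * t) := by
      intro p hp
      simp only [Finset.mem_filter] at hp
      have hsum : ((p.1 : ℝ)) * t + ((p.2 : ℝ)) * t = (n : ℝ) * t := by
        have : ((p.1 + p.2 : ℤ) : ℝ) = (n : ℝ) := by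
          exact_mod_cast congrArg (fun z : ℤ => (z : ℝ)) hp.2
        push_cast at this
        linear_combination t * this
      rw [show ((w2 m p.1 : ℂ) * ee (p.1 * t)) * ((w2 m p.2 : ℂ) * ee (p.2 * t)) =
        ((w2 m p.1 : ℂ) * (w2 m p.2 : ℂ)) * (ee (p.1 * t) * ee (p.2 * t)) by ring,
        ← ee_add, hsum]
      push_cast
      ring
    rw [Finset.sum_congr rfl hterm, ← Finset.sum_mul, w4]
    push_cast
    ring
  · intro p hp
    simp only [Finset.mem_product, Finset.mem_Icc] at hp
    simp only [Finset.mem_Icc]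
    omega

lemma ee_ne_one {t ε : ℝ} (hε : 0 < ε) (hfar : ε ≤ |t - round t|) : ee t ≠ 1 := by
  intro h
  unfold ee at h
  rw [Complex.exp_eq_one_iff] at h
  obtain ⟨n, hn⟩ := h
  have hπ : (Real.pi : ℂ) ≠ 0 := by exact_mod_cast Real.pi_ne_zero
  have ht : (t : ℂ) = (n : ℂ) := by
    have hne : (2 * (Real.pi : ℂ) * Complex.I) ≠ 0 := by
      simp [Complex.I_ne_zero, Complex.ofReal_ne_zero, Real.pi_ne_zero]
    apply mul_left_cancel₀ hne
    linear_combination hn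
  have ht' : t = (n : ℝ) := by exact_mod_cast ht
  rw [ht'] at hfar
  rw [round_intCast, sub_self, abs_zero] at hfar
  linarith

lemma abs_sin_pi_eq (t : ℝ) : |Real.sin (Real.pi * t)| = |Real.sin (Real.pi * (t - round t))| := by
  have hdecomp : Real.pi * t = Real.pi * (t - round t) + (round t : ℝ) * Real.pi := by ring
  rw [hdecomp, Real.sin_add, Real.sin_int_mul_pi, mul_zero, add_zero, abs_mul]
  have hcos : |Real.cos ((round t : ℝ) * Real.pi)| = 1 := by
    have hs : Real.sin ((round t : ℝ) * Real.pi) = 0 := Real.sin_int_mul_pi _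
    have := Real.sin_sq_add_cos_sq ((round t : ℝ) * Real.pi)
    rw [hs] at this
    have h1 : Real.cos ((round t : ℝ) * Real.pi) ^ 2 = 1 := by linarith
    rw [← Real.sqrt_sq_eq_abs, h1, Real.sqrt_one]
  rw [hcos, mul_one]

lemma sin_pi_bound {t ε : ℝ} (hε : 0 < ε) (hfar : ε ≤ |t - round t|) :
    Real.sin (Real.pi * ε) ≤ |Real.sin (Real.pi * t)| := by
  have h2 : |t - round t| ≤ 1 / 2 := abs_sub_round t
  have hehalf : ε ≤ 1 / 2 := le_trans hfar h2
  rw [abs_sin_pi_eq t]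
  set θ := t - round t with hθ
  have habs : |Real.sin (Real.pi * θ)| = Real.sin (Real.pi * |θ|) := by
    rcases le_or_gt 0 θ with h | h
    · rw [_root_.abs_of_nonneg h, _root_.abs_of_nonneg]
      have h2' : θ ≤ 1 / 2 := le_trans (le_abs_self θ) h2
      apply Real.sin_nonneg_of_nonneg_of_le_pi
      · positivity
      · nlinarith [Real.pi_pos]
    · rw [_root_.abs_of_neg h]
      have h2' : -θ ≤ 1 / 2 := by
        rw [_root_.abs_of_neg h] at h2
        linarith
      have hpos : 0 ≤ Real.sin (Real.pi * -θ) := by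
        apply Real.sin_nonneg_of_nonneg_of_le_pi
        · nlinarith [Real.pi_pos]
        · nlinarith [Real.pi_pos]
      have hsinneg : Real.sin (Real.pi * θ) = -Real.sin (Real.pi * -θ) := by
        rw [show Real.pi * -θ = -(Real.pi * θ) by ring, Real.sin_neg]
        ring
      rw [hsinneg, abs_neg, _root_.abs_of_nonneg hpos]
  rw [habs]
  have hmem1 : Real.pi * ε ∈ Set.Icc (-(Real.pi / 2)) (Real.pi / 2) := by
    constructor <;> nlinarith [Real.pi_pos]
  have hmem2 : Real.pi * |θ| ∈ Set.Icc (-(Real.pi / 2)) (Real.pi / 2) := by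
    have h0 : (0 : ℝ) ≤ |θ| := abs_nonneg θ
    constructor <;> nlinarith [Real.pi_pos]
  exact Real.strictMonoOn_sin.monotoneOn hmem1 hmem2
    (by nlinarith [Real.pi_pos])

lemma ee_sub_one_norm (t : ℝ) : ‖ee t - 1‖ = 2 * |Real.sin (Real.pi * t)| := by
  have heet : ee t = ((Real.cos (2 * Real.pi * t) : ℂ) + (Real.sin (2 * Real.pi * t) : ℂ)
      * Complex.I) := by
    unfold ee
    rw [show (2 * (Real.pi : ℂ) * Complex.I * t) = ((2 * Real.pi * t : ℝ) : ℂ) * Complex.I by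
      push_cast; ring, Complex.exp_mul_I, Complex.ofReal_cos, Complex.ofReal_sin]
  have hsub : ee t - 1 = ((Real.cos (2 * Real.pi * t) - 1 : ℝ) : ℂ)
      + ((Real.sin (2 * Real.pi * t) : ℝ) : ℂ) * Complex.I := by
    rw [heet]; push_cast; ring
  have hnsq : Complex.normSq (ee t - 1) =
      (Real.cos (2 * Real.pi * t) - 1) ^ 2 + (Real.sin (2 * Real.pi * t)) ^ 2 := by
    rw [hsub, Complex.normSq_add_mul_I]
  have hid : (Real.cos (2 * Real.pi * t) - 1) ^ 2 + (Real.sin (2 * Real.pi * t)) ^ 2 =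
      (2 * Real.sin (Real.pi * t)) ^ 2 := by
    have hc2 : Real.cos (2 * (Real.pi * t)) = 2 * Real.cos (Real.pi * t) ^ 2 - 1 :=
      Real.cos_two_mul _
    have hp1 : Real.sin (Real.pi * t) ^ 2 + Real.cos (Real.pi * t) ^ 2 = 1 :=
      Real.sin_sq_add_cos_sq _
    have hp2 : Real.sin (2 * Real.pi * t) ^ 2 + Real.cos (2 * Real.pi * t) ^ 2 = 1 :=
      Real.sin_sq_add_cos_sq _
    rw [show 2 * Real.pi * t = 2 * (Real.pi * t) by ring] at hp2 ⊢
    nlinarith [hc2, hp1, hp2]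
  rw [Complex.norm_def, hnsq, hid, Real.sqrt_sq_eq_abs, abs_mul]
  norm_num

lemma GG_far_bound (m : ℕ) {t ε : ℝ} (hε : 0 < ε) (hfar : ε ≤ |t - round t|) :
    Complex.normSq (GG m t) ≤ 1 / Real.sin (Real.pi * ε) ^ 2 := by
  have h2 : |t - round t| ≤ 1 / 2 := abs_sub_round t
  have hehalf : ε ≤ 1 / 2 := le_trans hfar h2
  have hsinpos : 0 < Real.sin (Real.pi * ε) := by
    apply Real.sin_pos_of_pos_of_lt_pi
    · positivity
    · nlinarith [Real.pi_pos]
  have hsint := sin_pi_bound hε hfar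
  have hne : ee t ≠ 1 := ee_ne_one hε hfar
  have hGG : GG m t = ((ee t) ^ (m + 1) - 1) / (ee t - 1) := by
    unfold GG
    rw [Finset.sum_congr rfl (fun n _ => ee_nat_pow n t)]
    exact geom_sum_eq hne (m + 1)
  have hden : ‖ee t - 1‖ = 2 * |Real.sin (Real.pi * t)| := ee_sub_one_norm t
  have hdenpos : 0 < ‖ee t - 1‖ := by
    rw [norm_pos_iff]
    exact sub_ne_zero.mpr hne
  have hnum : ‖(ee t) ^ (m + 1) - 1‖ ≤ 2 := by
    calc ‖(ee t) ^ (m + 1) - 1‖ ≤ ‖(ee t) ^ (m + 1)‖ + ‖(1 : ℂ)‖ := norm_sub_le _ _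
      _ = 2 := by rw [norm_pow, ee_norm]; norm_num
  have habs : 0 < |Real.sin (Real.pi * t)| := lt_of_lt_of_le hsinpos hsint
  have hnorm : ‖GG m t‖ ≤ 1 / |Real.sin (Real.pi * t)| := by
    rw [hGG, norm_div, hden]
    rw [div_le_div_iff₀ (by linarith) habs]
    nlinarith [hnum, habs]
  have h6 : ‖GG m t‖ ≤ 1 / Real.sin (Real.pi * ε) :=
    le_trans hnorm (one_div_le_one_div_of_le hsinpos hsint)
  have h7 : Complex.normSq (GG m t) = ‖GG m t‖ ^ 2 := by
    rw [Complex.normSq_eq_norm_sq]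
  rw [h7]
  calc ‖GG m t‖ ^ 2 ≤ (1 / Real.sin (Real.pi * ε)) ^ 2 :=
        pow_le_pow_left₀ (norm_nonneg _) h6 2
    _ = 1 / Real.sin (Real.pi * ε) ^ 2 := by rw [div_pow]; norm_num

lemma chord_sin {ε a : ℝ} (hε : 0 < ε) (hεa : ε ≤ a) (ha : a ≤ 1 / 2) :
    (ε / a) * Real.sin (Real.pi * a) ≤ Real.sin (Real.pi * ε) := by
  have ha0 : 0 < a := lt_of_lt_of_le hε hεa
  have hconc := strictConcaveOn_sin_Icc.concaveOn
  have hx : (0 : ℝ) ∈ Set.Icc (0 : ℝ) Real.pi := by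
    constructor
    · exact le_refl 0
    · exact Real.pi_pos.le
  have hy : Real.pi * a ∈ Set.Icc (0 : ℝ) Real.pi := by
    constructor
    · positivity
    · nlinarith [Real.pi_pos]
  have hq1 : (0 : ℝ) ≤ 1 - ε / a := by
    have : ε / a ≤ 1 := by
      rw [div_le_one ha0]
      exact hεa
    linarith
  have hq2 : (0 : ℝ) ≤ ε / a := by positivity
  have key := hconc.2 hx hy hq1 hq2 (by ring)
  simp only [smul_eq_mul, Real.sin_zero, mul_zero, zero_add] at key
  have harg : (ε / a) * (Real.pi * a) = Real.pi * ε := by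
    field_simp
  rw [harg] at key
  exact key

lemma sin_pi_mono {a b : ℝ} (ha : 0 ≤ a) (hab : a ≤ b) (hb : b ≤ 1 / 2) :
    Real.sin (Real.pi * a) ≤ Real.sin (Real.pi * b) := by
  have := Real.pi_pos
  apply Real.strictMonoOn_sin.monotoneOn ?_ ?_ (by nlinarith)
  · constructor <;> nlinarith
  · constructor <;> nlinarith

lemma sin_pi_strict_mono {a b : ℝ} (ha : 0 ≤ a) (hab : a < b) (hb : b ≤ 1 / 2) :
    Real.sin (Real.pi * a) < Real.sin (Real.pi * b) := by
  have := Real.pi_pos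
  apply Real.strictMonoOn_sin ?_ ?_ (by nlinarith)
  · constructor <;> nlinarith
  · constructor <;> nlinarith

lemma num_ineq (l : ℕ) (hl : 1 ≤ l) {ε : ℝ} (hε : 0 < ε) (hε2 : ε ≤ 1 / 2)
    (J m : ℕ) (hJ : (J : ℤ) = ⌊(l : ℝ) / ε⌋) (hm : m = J / 2) :
    9 * (l : ℝ) ≤ 2 * (2 * ((m : ℝ) + 1) ^ 2 + 1) * Real.sin (Real.pi * ε) ^ 2 := by
  set s := Real.sin (Real.pi * ε) with hs
  have hspos : 0 < s := by
    apply Real.sin_pos_of_pos_of_lt_pi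
    · positivity
    · nlinarith [Real.pi_pos]
  have hl1 : (1 : ℝ) ≤ l := by exact_mod_cast hl
  have hfl : (l : ℝ) / ε < (J : ℝ) + 1 := by
    have h1 := Int.lt_floor_add_one ((l : ℝ) / ε)
    rw [← hJ] at h1
    exact_mod_cast h1
  have hμ : (l : ℝ) / (2 * ε) < (m : ℝ) + 1 := by
    have h2m : J ≤ 2 * m + 1 := by omega
    have h2m' : (J : ℝ) ≤ 2 * (m : ℝ) + 1 := by exact_mod_cast h2m
    have hd : (l : ℝ) / ε < 2 * ((m : ℝ) + 1) := by linarith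
    rw [div_lt_iff₀ (by positivity)] at hd ⊢
    linarith
  have hμpos : (0 : ℝ) < (m : ℝ) + 1 := by positivity
  have hlmu : (l : ℝ) < ((m : ℝ) + 1) * (2 * ε) := by
    rw [div_lt_iff₀ (by positivity)] at hμ
    linarith
  have h2eps : 2 * ε ≤ s := by
    have := chord_sin hε hε2 (le_refl (1 / 2 : ℝ))
    rw [show Real.pi * (1 / 2 : ℝ) = Real.pi / 2 by ring, Real.sin_pi_div_two] at this
    rw [hs]
    calc 2 * ε = ε / (1 / 2) * 1 := by ring
      _ ≤ _ := this
  rcases Nat.lt_or_ge l 3 with h3 | h3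
  · -- l = 1 or l = 2
    interval_cases l
    · -- l = 1
      rcases le_or_gt ε (1 / 6) with he6 | he6
      · have hc := chord_sin hε he6 (by norm_num)
        rw [show Real.pi * (1 / 6 : ℝ) = Real.pi / 6 by ring, Real.sin_pi_div_six] at hc
        have hc' : 3 * ε ≤ s := by
          rw [hs]
          calc 3 * ε = ε / (1 / 6) * (1 / 2) := by ring
            _ ≤ _ := hc
        have hsμ : (3 : ℝ) / 2 < s * ((m : ℝ) + 1) := by
          have h1 : (1 : ℝ) < 2 * ε * ((m : ℝ) + 1) := by
            rw [div_lt_iff₀ (by positivity)] at hμ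
            push_cast at hμ ⊢
            nlinarith
          nlinarith
        push_cast
        nlinarith [sq_nonneg s, hsμ, hspos, hμpos]
      · rcases le_or_gt ε (1 / 4) with he4 | he4
        · -- 1/6 < ε ≤ 1/4 : J ∈ {4,5}, m = 2
          have hJlo : (4 : ℤ) ≤ (J : ℤ) := by
            rw [hJ]
            apply Int.le_floor.mpr
            push_cast
            rw [le_div_iff₀ hε]
            linarith
          have hJhi : (J : ℤ) < 6 := by
            rw [hJ]
            apply Int.floor_lt.mpr
            push_cast
            rw [div_lt_iff₀ hε]
            linarith
          have hm2 : m = 2 := by omega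
          have hshalf : (1 : ℝ) / 2 < s := by
            have := sin_pi_strict_mono (by norm_num : (0:ℝ) ≤ 1/6) he6 hε2
            rw [show Real.pi * (1 / 6 : ℝ) = Real.pi / 6 by ring, Real.sin_pi_div_six] at this
            exact this
          rw [hm2]
          push_cast
          nlinarith [hshalf, hspos]
        · rcases le_or_gt ε (1 / 3) with he3 | he3
          · -- 1/4 < ε ≤ 1/3 : J = 3, m = 1
            have hJlo : (3 : ℤ) ≤ (J : ℤ) := by
              rw [hJ]
              apply Int.le_floor.mpr
              push_cast
              rw [le_div_iff₀ hε]
              linarith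
            have hJhi : (J : ℤ) < 4 := by
              rw [hJ]
              apply Int.floor_lt.mpr
              push_cast
              rw [div_lt_iff₀ hε]
              linarith
            have hm1 : m = 1 := by omega
            have hs4 : Real.sqrt 2 / 2 < s := by
              have := sin_pi_strict_mono (by norm_num : (0:ℝ) ≤ 1/4) he4 hε2
              rw [show Real.pi * (1 / 4 : ℝ) = Real.pi / 4 by ring,
                Real.sin_pi_div_four] at this
              exact this
            have hsq2 : Real.sqrt 2 ^ 2 = 2 := Real.sq_sqrt (by norm_num)
            have hsq2' : (0 : ℝ) ≤ Real.sqrt 2 := Real.sqrt_nonneg 2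
            rw [hm1]
            push_cast
            nlinarith [hs4, hspos, hsq2, hsq2']
          · -- 1/3 < ε ≤ 1/2 : J = 2, m = 1
            have hJlo : (2 : ℤ) ≤ (J : ℤ) := by
              rw [hJ]
              apply Int.le_floor.mpr
              push_cast
              rw [le_div_iff₀ hε]
              linarith
            have hJhi : (J : ℤ) < 3 := by
              rw [hJ]
              apply Int.floor_lt.mpr
              push_cast
              rw [div_lt_iff₀ hε]
              linarith
            have hm1 : m = 1 := by omega
            have hs3 : Real.sqrt 3 / 2 < s := by
              have := sin_pi_strict_mono (by norm_num : (0:ℝ) ≤ 1/3) he3 hε2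
              rw [show Real.pi * (1 / 3 : ℝ) = Real.pi / 3 by ring,
                Real.sin_pi_div_three] at this
              exact this
            have hsq3 : Real.sqrt 3 ^ 2 = 3 := Real.sq_sqrt (by norm_num)
            have hsq3' : (0 : ℝ) ≤ Real.sqrt 3 := Real.sqrt_nonneg 3
            rw [hm1]
            push_cast
            nlinarith [hs3, hspos, hsq3, hsq3']
    · -- l = 2
      rcases le_or_gt ε (2 / 5) with he5 | he5
      · have hc := chord_sin hε he5 (by norm_num)
        have hsin25 : Real.sqrt 3 / 2 ≤ Real.sin (Real.pi * (2 / 5)) := by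
          have := sin_pi_mono (a := 1/3) (b := 2/5) (by norm_num) (by norm_num) (by norm_num)
          rw [show Real.pi * (1 / 3 : ℝ) = Real.pi / 3 by ring, Real.sin_pi_div_three] at this
          exact this
        have hsq3 : Real.sqrt 3 ^ 2 = 3 := Real.sq_sqrt (by norm_num)
        have hsq3' : (0 : ℝ) ≤ Real.sqrt 3 := Real.sqrt_nonneg 3
        have hc' : (5 / 2) * ε * (Real.sqrt 3 / 2) ≤ s := by
          rw [hs]
          calc (5 / 2) * ε * (Real.sqrt 3 / 2) ≤ (ε / (2 / 5)) * Real.sin (Real.pi * (2/5)) := by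
                rw [show ε / (2 / 5) = (5 / 2) * ε by ring]
                apply mul_le_mul_of_nonneg_left hsin25 (by positivity)
            _ ≤ _ := hc
        have hμ2 : (1 : ℝ) / ε < (m : ℝ) + 1 := by
          have : (2 : ℝ) / (2 * ε) = 1 / ε := by field_simp
          rw [show ((2:ℕ) : ℝ) = (2:ℝ) by norm_num, this] at hμ
          exact hμ
        have hεμ : (1 : ℝ) < ε * ((m : ℝ) + 1) := by
          rw [div_lt_iff₀ hε] at hμ2
          linarith [mul_comm ε ((m : ℝ) + 1)]
        have hsμ : (5 / 2) * (Real.sqrt 3 / 2) < s * ((m : ℝ) + 1) := by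
          nlinarith [hc', hεμ, hspos, hμpos, hε]
        push_cast
        nlinarith [hsμ, hspos, hμpos, hsq3, hsq3']
      · -- 2/5 < ε ≤ 1/2 : J = 4, m = 2
        have hJlo : (4 : ℤ) ≤ (J : ℤ) := by
          rw [hJ]
          apply Int.le_floor.mpr
          push_cast
          rw [le_div_iff₀ hε]
          linarith
        have hJhi : (J : ℤ) < 5 := by
          rw [hJ]
          apply Int.floor_lt.mpr
          push_cast
          rw [div_lt_iff₀ hε]
          linarith
        have hm2 : m = 2 := by omega
        have hs3 : Real.sqrt 3 / 2 < s := by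
          have := sin_pi_strict_mono (by norm_num : (0:ℝ) ≤ 1/3) (by linarith) hε2
          rw [show Real.pi * (1 / 3 : ℝ) = Real.pi / 3 by ring, Real.sin_pi_div_three] at this
          exact this
        have hsq3 : Real.sqrt 3 ^ 2 = 3 := Real.sq_sqrt (by norm_num)
        have hsq3' : (0 : ℝ) ≤ Real.sqrt 3 := Real.sqrt_nonneg 3
        rw [hm2]
        push_cast
        nlinarith [hs3, hspos, hsq3, hsq3']
  · -- l ≥ 3
    have hl3 : (3 : ℝ) ≤ l := by exact_mod_cast h3
    have hlμs : (l : ℝ) ≤ ((m : ℝ) + 1) * s := by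
      calc (l : ℝ) ≤ ((m : ℝ) + 1) * (2 * ε) := hlmu.le
        _ ≤ ((m : ℝ) + 1) * s := by
            apply mul_le_mul_of_nonneg_left h2eps hμpos.le
    have h4 : (l : ℝ) ^ 2 ≤ (((m : ℝ) + 1) * s) ^ 2 := by
      nlinarith [hlμs, hl1]
    nlinarith [h4, hl3, sq_nonneg s, hspos, hμpos]

lemma kernel_expand (l J m : ℕ) (h2m : 2 * m ≤ J) (B : ℝ) (x : Fin l → ℝ) :
    ((∏ j, (Complex.normSq (GG m (x j))) ^ 2
      - B * ∑ j0 : Fin l, ∏ j, (if j = j0 then Complex.normSq (GG m (x j))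
          else (Complex.normSq (GG m (x j))) ^ 2) : ℝ) : ℂ)
    = ∑ γ ∈ Fintype.piFinset (fun _ : Fin l => Finset.Icc (-(J : ℤ)) (J : ℤ)),
        ((((∏ j, (w4 m (γ j) : ℝ)) - B * ∑ j0 : Fin l,
            ∏ j, (if j = j0 then (w2 m (γ j) : ℝ) else (w4 m (γ j) : ℝ))) : ℝ) : ℂ)
          * ∏ j, ee ((γ j : ℝ) * x j) := by
  have hmJ : m ≤ J := by omega
  -- coordinate-wise expansions
  have hcoord : ∀ j0 j : Fin l,
      (if j = j0 then ((Complex.normSq (GG m (x j)) : ℝ) : ℂ)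
        else (((Complex.normSq (GG m (x j))) ^ 2 : ℝ) : ℂ))
      = ∑ n ∈ Finset.Icc (-(J : ℤ)) (J : ℤ),
          (((if j = j0 then (w2 m n : ℝ) else (w4 m n : ℝ)) : ℝ) : ℂ) * ee ((n : ℝ) * x j) := by
    intro j0 j
    by_cases h : j = j0
    · simp only [h, if_pos rfl]
      rw [normSq_GG_expand m J hmJ]
      apply Finset.sum_congr rfl
      intro n _
      norm_num
    · simp only [if_neg h]
      rw [normSq_sq_GG_expand m J h2m]
      apply Finset.sum_congr rfl
      intro n _
      norm_num
  -- first term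
  have hT1 : ((∏ j, (Complex.normSq (GG m (x j))) ^ 2 : ℝ) : ℂ)
      = ∑ γ ∈ Fintype.piFinset (fun _ : Fin l => Finset.Icc (-(J : ℤ)) (J : ℤ)),
          ((∏ j, (w4 m (γ j) : ℝ) : ℝ) : ℂ) * ∏ j, ee ((γ j : ℝ) * x j) := by
    rw [Complex.ofReal_prod]
    have : ∀ j : Fin l, (((Complex.normSq (GG m (x j))) ^ 2 : ℝ) : ℂ)
        = ∑ n ∈ Finset.Icc (-(J : ℤ)) (J : ℤ), (w4 m n : ℂ) * ee ((n : ℝ) * x j) :=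
      fun j => normSq_sq_GG_expand m J h2m (x j)
    rw [Finset.prod_congr rfl (fun j _ => this j)]
    rw [Finset.prod_univ_sum]
    apply Finset.sum_congr rfl
    intro γ _
    rw [Finset.prod_mul_distrib]
    congr 1
    rw [Complex.ofReal_prod]
    exact Finset.prod_congr rfl (fun j _ => by norm_num)
  -- second group of terms
  have hT2 : ∀ j0 : Fin l,
      ((∏ j, (if j = j0 then Complex.normSq (GG m (x j))
          else (Complex.normSq (GG m (x j))) ^ 2) : ℝ) : ℂ)
      = ∑ γ ∈ Fintype.piFinset (fun _ : Fin l => Finset.Icc (-(J : ℤ)) (J : ℤ)),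
          ((∏ j, (if j = j0 then (w2 m (γ j) : ℝ) else (w4 m (γ j) : ℝ)) : ℝ) : ℂ)
            * ∏ j, ee ((γ j : ℝ) * x j) := by
    intro j0
    rw [Complex.ofReal_prod]
    have : ∀ j : Fin l, ((((if j = j0 then Complex.normSq (GG m (x j))
        else (Complex.normSq (GG m (x j))) ^ 2) : ℝ)) : ℂ)
        = ∑ n ∈ Finset.Icc (-(J : ℤ)) (J : ℤ),
            (((if j = j0 then (w2 m n : ℝ) else (w4 m n : ℝ)) : ℝ) : ℂ) * ee ((n : ℝ) * x j) := by
      intro j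
      rw [apply_ite (fun r : ℝ => (r : ℂ))]
      exact hcoord j0 j
    rw [Finset.prod_congr rfl (fun j _ => this j)]
    rw [Finset.prod_univ_sum]
    apply Finset.sum_congr rfl
    intro γ _
    rw [Finset.prod_mul_distrib]
    congr 1
    rw [Complex.ofReal_prod]
  -- assemble
  rw [Complex.ofReal_sub, Complex.ofReal_mul, Complex.ofReal_sum, hT1,
    Finset.sum_congr rfl (fun j0 _ => hT2 j0), Finset.sum_comm, Finset.mul_sum,
    ← Finset.sum_sub_distrib]
  apply Finset.sum_congr rfl
  intro γ _
  conv_rhs => rw [Complex.ofReal_sub, Complex.ofReal_mul, Complex.ofReal_sum, sub_mul,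
    mul_assoc, Finset.sum_mul]

/-- **Lemma 1 (Barton–Montgomery–Vaaler).** If `ξ₁, …, ξ_k ∈ ℝ^ℓ` all have sup-norm
distance at least `ε` from the lattice `ℤ^ℓ`, then
`k/3 ≤ ∑_{0 < ‖m‖_∞ ≤ ⌊ℓ/ε⌋} |∑_i exp(2πi m·ξᵢ)|`. -/
theorem statement10 (l k : ℕ) (hl : 0 < l) (ε : ℝ) (hε : 0 < ε) (hε2 : ε ≤ 1 / 2)
    (ξ : Fin k → (Fin l → ℝ))
    (hξ : ∀ i : Fin k, ∀ v : Fin l → ℤ, ∃ j : Fin l, ε ≤ |ξ i j - (v j : ℝ)|) :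
    (k : ℝ) / 3 ≤
      ∑ m ∈ freqBox l (⌊(l : ℝ) / ε⌋.toNat),
        ‖∑ i : Fin k,
            Complex.exp (2 * Real.pi * Complex.I * ((∑ j, (m j : ℝ) * ξ i j) : ℝ))‖ := by
  classical
  set J : ℕ := (⌊(l : ℝ) / ε⌋).toNat with hJdef
  set m : ℕ := J / 2 with hmdef
  set B : ℝ := 1 / Real.sin (Real.pi * ε) ^ 2 with hBdef
  have hJcast : (J : ℤ) = ⌊(l : ℝ) / ε⌋ := by
    rw [hJdef]
    exact Int.toNat_of_nonneg (Int.floor_nonneg.mpr (by positivity))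
  have hspos : 0 < Real.sin (Real.pi * ε) := by
    apply Real.sin_pos_of_pos_of_lt_pi
    · positivity
    · nlinarith [Real.pi_pos]
  have hs2pos : 0 < Real.sin (Real.pi * ε) ^ 2 := by positivity
  have hBpos : 0 < B := by rw [hBdef]; positivity
  have hnum := num_ineq l hl hε hε2 J m hJcast hmdef
  have h2m : 2 * m ≤ J := by omega
  set Q : ℕ := w4 m 0 with hQdef
  have hQpos : (0 : ℝ) < (Q : ℝ) := by exact_mod_cast w4_pos m
  have hQl : (0 : ℝ) < (Q : ℝ) ^ l := pow_pos hQpos l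
  have hQval : 3 * (Q : ℝ) = ((m : ℝ) + 1) * (2 * ((m : ℝ) + 1) ^ 2 + 1) := by
    exact_mod_cast w4_zero_val m
  -- the key numeric bound
  have hBnum : B * l * ((m : ℝ) + 1) ≤ 2 / 3 * (Q : ℝ) := by
    rw [hBdef, div_mul_eq_mul_div, div_mul_eq_mul_div, div_le_iff₀ hs2pos]
    nlinarith [hnum, hs2pos, hQpos, sq_nonneg ((m : ℝ) + 1)]
  -- notation
  set H : ℝ → ℝ := fun t => Complex.normSq (GG m t) with hHdef
  have hH0 : ∀ t, 0 ≤ H t := fun t => Complex.normSq_nonneg _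
  set KK : (Fin l → ℝ) → ℝ := fun x => (∏ j, (H (x j)) ^ 2)
      - B * ∑ j0 : Fin l, ∏ j, (if j = j0 then H (x j) else (H (x j)) ^ 2) with hKKdef
  set W : (Fin l → ℤ) → ℝ := fun γ => (∏ j, (w4 m (γ j) : ℝ)) - B * ∑ j0 : Fin l,
      ∏ j, (if j = j0 then (w2 m (γ j) : ℝ) else (w4 m (γ j) : ℝ)) with hWdef
  set Z : (Fin l → ℤ) → ℂ := fun γ => ∑ i : Fin k, ∏ j, ee ((γ j : ℝ) * ξ i j) with hZdef
  set Box : Finset (Fin l → ℤ) := Fintype.piFinset (fun _ : Fin l => Finset.Icc (-(J : ℤ)) (J : ℤ))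
    with hBoxdef
  -- pointwise kernel nonpositivity
  have hKneg : ∀ i : Fin k, KK (ξ i) ≤ 0 := by
    intro i
    obtain ⟨j0, hj0⟩ := hξ i (fun j => round (ξ i j))
    have hHb : H (ξ i j0) ≤ B := GG_far_bound m hε hj0
    have hprod2 : (∏ j, (H (ξ i j)) ^ 2)
        = (H (ξ i j0)) ^ 2 * ∏ j ∈ Finset.univ.erase j0, (H (ξ i j)) ^ 2 :=
      (Finset.mul_prod_erase Finset.univ _ (Finset.mem_univ j0)).symm
    have hprodite : (∏ j, (if j = j0 then H (ξ i j) else (H (ξ i j)) ^ 2))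
        = H (ξ i j0) * ∏ j ∈ Finset.univ.erase j0, (H (ξ i j)) ^ 2 := by
      rw [← Finset.mul_prod_erase Finset.univ _ (Finset.mem_univ j0), if_pos rfl]
      congr 1
      apply Finset.prod_congr rfl
      intro j hj
      rw [if_neg (Finset.ne_of_mem_erase hj)]
    have hsum_ge : (∏ j, (if j = j0 then H (ξ i j) else (H (ξ i j)) ^ 2))
        ≤ ∑ j0' : Fin l, ∏ j, (if j = j0' then H (ξ i j) else (H (ξ i j)) ^ 2) := by
      apply Finset.single_le_sum (f := fun j0' => ∏ j,
        (if j = j0' then H (ξ i j) else (H (ξ i j)) ^ 2)) ?_ (Finset.mem_univ j0)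
      intro j' _
      apply Finset.prod_nonneg
      intro j _
      split_ifs
      · exact hH0 _
      · positivity
    have hR : 0 ≤ ∏ j ∈ Finset.univ.erase j0, (H (ξ i j)) ^ 2 := by positivity
    rw [hKKdef]
    simp only
    have h1 : B * (∏ j, (if j = j0 then H (ξ i j) else (H (ξ i j)) ^ 2))
        ≤ B * ∑ j0' : Fin l, ∏ j, (if j = j0' then H (ξ i j) else (H (ξ i j)) ^ 2) :=
      mul_le_mul_of_nonneg_left hsum_ge hBpos.le
    rw [hprodite] at h1
    rw [hprod2]
    have hc : 0 ≤ H (ξ i j0) * ∏ j ∈ Finset.univ.erase j0, (H (ξ i j)) ^ 2 :=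
      mul_nonneg (hH0 _) hR
    have h2 : H (ξ i j0) * (H (ξ i j0) * ∏ j ∈ Finset.univ.erase j0, (H (ξ i j)) ^ 2)
        ≤ B * (H (ξ i j0) * ∏ j ∈ Finset.univ.erase j0, (H (ξ i j)) ^ 2) :=
      mul_le_mul_of_nonneg_right hHb hc
    nlinarith [h1, h2]
  -- coefficient bounds
  have hT1bound : ∀ γ : Fin l → ℤ, 0 ≤ (∏ j, (w4 m (γ j) : ℝ))
      ∧ (∏ j, (w4 m (γ j) : ℝ)) ≤ (Q : ℝ) ^ l := by
    intro γ
    constructor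
    · exact Finset.prod_nonneg fun j _ => Nat.cast_nonneg _
    · calc (∏ j, (w4 m (γ j) : ℝ)) ≤ ∏ _j : Fin l, (Q : ℝ) := by
            apply Finset.prod_le_prod
            · intro j _; exact Nat.cast_nonneg _
            · intro j _; exact Nat.cast_le.mpr (w4_le m (γ j))
        _ = (Q : ℝ) ^ l := by
            rw [Finset.prod_const, Finset.card_univ, Fintype.card_fin]
  have hT2bound : ∀ γ : Fin l → ℤ, 0 ≤ (∑ j0 : Fin l,
        ∏ j, (if j = j0 then (w2 m (γ j) : ℝ) else (w4 m (γ j) : ℝ)))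
      ∧ (∑ j0 : Fin l, ∏ j, (if j = j0 then (w2 m (γ j) : ℝ) else (w4 m (γ j) : ℝ)))
        ≤ l * (((m : ℝ) + 1) * (Q : ℝ) ^ (l - 1)) := by
    intro γ
    have hterm : ∀ j0 : Fin l, 0 ≤ (∏ j, (if j = j0 then (w2 m (γ j) : ℝ) else (w4 m (γ j) : ℝ)))
        ∧ (∏ j, (if j = j0 then (w2 m (γ j) : ℝ) else (w4 m (γ j) : ℝ)))
          ≤ ((m : ℝ) + 1) * (Q : ℝ) ^ (l - 1) := by
      intro j0
      constructor
      · apply Finset.prod_nonneg; intro j _; split_ifs <;> exact Nat.cast_nonneg _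
      · rw [← Finset.mul_prod_erase Finset.univ _ (Finset.mem_univ j0), if_pos rfl]
        have hcard : (Finset.univ.erase j0).card = l - 1 := by
          rw [Finset.card_erase_of_mem (Finset.mem_univ j0), Finset.card_univ, Fintype.card_fin]
        apply mul_le_mul
        · have h := w2_le m (γ j0)
          have : ((w2 m (γ j0) : ℕ) : ℝ) ≤ ((m + 1 : ℕ) : ℝ) := Nat.cast_le.mpr h
          push_cast at this
          linarith
        · calc (∏ j ∈ Finset.univ.erase j0,
                (if j = j0 then (w2 m (γ j) : ℝ) else (w4 m (γ j) : ℝ)))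
              = ∏ j ∈ Finset.univ.erase j0, (w4 m (γ j) : ℝ) := by
                apply Finset.prod_congr rfl
                intro j hj
                rw [if_neg (Finset.ne_of_mem_erase hj)]
            _ ≤ ∏ _j ∈ Finset.univ.erase j0, (Q : ℝ) := by
                apply Finset.prod_le_prod
                · intro j _; exact Nat.cast_nonneg _
                · intro j _; exact Nat.cast_le.mpr (w4_le m (γ j))
            _ = (Q : ℝ) ^ (l - 1) := by rw [Finset.prod_const, hcard]
        · apply Finset.prod_nonneg; intro j _; split_ifs <;> exact Nat.cast_nonneg _
        · have hm0 : (0:ℝ) ≤ (m:ℝ) := Nat.cast_nonneg m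
          linarith
    constructor
    · apply Finset.sum_nonneg; intro j0 _; exact (hterm j0).1
    · calc (∑ j0 : Fin l, ∏ j, (if j = j0 then (w2 m (γ j) : ℝ) else (w4 m (γ j) : ℝ)))
          ≤ ∑ _j0 : Fin l, ((m : ℝ) + 1) * (Q : ℝ) ^ (l - 1) :=
            Finset.sum_le_sum (fun j0 _ => (hterm j0).2)
        _ = l * (((m : ℝ) + 1) * (Q : ℝ) ^ (l - 1)) := by
            rw [Finset.sum_const, Finset.card_univ, Fintype.card_fin, nsmul_eq_mul]
  have hQsplit : (Q : ℝ) ^ l = (Q : ℝ) * (Q : ℝ) ^ (l - 1) := by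
    rw [← pow_succ']
    congr 1
    omega
  have hBT2 : ∀ γ : Fin l → ℤ, B * (∑ j0 : Fin l,
      ∏ j, (if j = j0 then (w2 m (γ j) : ℝ) else (w4 m (γ j) : ℝ))) ≤ 2 / 3 * (Q : ℝ) ^ l := by
    intro γ
    have h1 := (hT2bound γ).2
    have h2 : B * (l * (((m : ℝ) + 1) * (Q : ℝ) ^ (l - 1)))
        ≤ 2 / 3 * (Q : ℝ) * (Q : ℝ) ^ (l - 1) := by
      have hq : (0 : ℝ) ≤ (Q : ℝ) ^ (l - 1) := pow_nonneg hQpos.le _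
      calc B * (l * (((m : ℝ) + 1) * (Q : ℝ) ^ (l - 1)))
          = (B * l * ((m : ℝ) + 1)) * (Q : ℝ) ^ (l - 1) := by ring
        _ ≤ (2 / 3 * (Q : ℝ)) * (Q : ℝ) ^ (l - 1) :=
            mul_le_mul_of_nonneg_right hBnum hq
    calc B * _ ≤ B * (l * (((m : ℝ) + 1) * (Q : ℝ) ^ (l - 1))) :=
          mul_le_mul_of_nonneg_left h1 hBpos.le
      _ ≤ 2 / 3 * (Q : ℝ) * (Q : ℝ) ^ (l - 1) := h2
      _ = 2 / 3 * (Q : ℝ) ^ l := by rw [hQsplit]; ring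
  have hWabs : ∀ γ : Fin l → ℤ, |W γ| ≤ (Q : ℝ) ^ l := by
    intro γ
    rw [hWdef]
    simp only
    rw [abs_le]
    have h1 := (hT1bound γ).1
    have h2 := (hT1bound γ).2
    have h3 := (hT2bound γ).1
    have h4 := hBT2 γ
    constructor
    · nlinarith
    · nlinarith [mul_nonneg hBpos.le h3]
  have hW0 : (1 / 3) * (Q : ℝ) ^ l ≤ W 0 := by
    rw [hWdef]
    simp only
    have hT1 : (∏ j : Fin l, (w4 m ((0 : Fin l → ℤ) j) : ℝ)) = (Q : ℝ) ^ l := by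
      simp only [Pi.zero_apply, hQdef]
      rw [Finset.prod_const, Finset.card_univ, Fintype.card_fin]
    have hT2 : (∑ j0 : Fin l, ∏ j, (if j = j0 then (w2 m ((0 : Fin l → ℤ) j) : ℝ)
        else (w4 m ((0 : Fin l → ℤ) j) : ℝ)))
        = l * (((m : ℝ) + 1) * (Q : ℝ) ^ (l - 1)) := by
      have hterm : ∀ j0 : Fin l, (∏ j, (if j = j0 then (w2 m ((0 : Fin l → ℤ) j) : ℝ)
          else (w4 m ((0 : Fin l → ℤ) j) : ℝ))) = ((m : ℝ) + 1) * (Q : ℝ) ^ (l - 1) := by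
        intro j0
        rw [← Finset.mul_prod_erase Finset.univ _ (Finset.mem_univ j0), if_pos rfl]
        have hcard : (Finset.univ.erase j0).card = l - 1 := by
          rw [Finset.card_erase_of_mem (Finset.mem_univ j0), Finset.card_univ, Fintype.card_fin]
        congr 1
        · simp only [Pi.zero_apply]
          rw [w2_zero]
          push_cast
          ring
        · calc _ = ∏ j ∈ Finset.univ.erase j0, (w4 m ((0 : Fin l → ℤ) j) : ℝ) := by
                apply Finset.prod_congr rfl
                intro j hj
                rw [if_neg (Finset.ne_of_mem_erase hj)]
            _ = (Q : ℝ) ^ (l - 1) := by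
                simp only [Pi.zero_apply, hQdef]
                rw [Finset.prod_const, hcard]
      rw [Finset.sum_congr rfl (fun j0 _ => hterm j0), Finset.sum_const, Finset.card_univ,
        Fintype.card_fin, nsmul_eq_mul]
    rw [hT1, hT2]
    have h2 : B * ((l : ℝ) * (((m : ℝ) + 1) * (Q : ℝ) ^ (l - 1)))
        ≤ 2 / 3 * (Q : ℝ) ^ l := by
      have hq : (0 : ℝ) ≤ (Q : ℝ) ^ (l - 1) := pow_nonneg hQpos.le _
      calc B * ((l : ℝ) * (((m : ℝ) + 1) * (Q : ℝ) ^ (l - 1)))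
          = (B * l * ((m : ℝ) + 1)) * (Q : ℝ) ^ (l - 1) := by ring
        _ ≤ (2 / 3 * (Q : ℝ)) * (Q : ℝ) ^ (l - 1) := mul_le_mul_of_nonneg_right hBnum hq
        _ = 2 / 3 * (Q : ℝ) ^ l := by rw [hQsplit]; ring
    linarith
  -- expansion
  have hexp : ∑ i : Fin k, ((KK (ξ i) : ℝ) : ℂ) = ∑ γ ∈ Box, ((W γ : ℝ) : ℂ) * Z γ := by
    have h1 : ∀ i : Fin k, ((KK (ξ i) : ℝ) : ℂ)
        = ∑ γ ∈ Box, ((W γ : ℝ) : ℂ) * ∏ j, ee ((γ j : ℝ) * ξ i j) := by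
      intro i
      rw [hKKdef, hWdef, hBoxdef]
      exact kernel_expand l J m h2m B (ξ i)
    rw [Finset.sum_congr rfl (fun i _ => h1 i), Finset.sum_comm]
    apply Finset.sum_congr rfl
    intro γ _
    rw [hZdef]
    simp only
    rw [Finset.mul_sum]
  -- split off the zero frequency
  have h0mem : (0 : Fin l → ℤ) ∈ Box := by
    rw [hBoxdef]
    simp only [Fintype.mem_piFinset, Pi.zero_apply, Finset.mem_Icc]
    intro j
    omega
  have hZ0 : Z 0 = (k : ℂ) := by
    rw [hZdef]
    simp only [Pi.zero_apply, Int.cast_zero, zero_mul, ee_zero, Finset.prod_const_one]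
    simp
  have hsplit : ∑ γ ∈ Box, ((W γ : ℝ) : ℂ) * Z γ
      = ((W 0 : ℝ) : ℂ) * (k : ℂ) + ∑ γ ∈ Box.erase 0, ((W γ : ℝ) : ℂ) * Z γ := by
    rw [← Finset.add_sum_erase Box _ h0mem, hZ0]
  have hsumK : (∑ i : Fin k, KK (ξ i)) ≤ 0 := Finset.sum_nonpos fun i _ => hKneg i
  have hkey : W 0 * (k : ℝ) ≤ (Q : ℝ) ^ l * ∑ γ ∈ Box.erase 0, ‖Z γ‖ := by
    have h1 := congrArg Complex.re hexp
    rw [hsplit] at h1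
    have hlhs : (∑ i : Fin k, ((KK (ξ i) : ℝ) : ℂ)).re = ∑ i : Fin k, KK (ξ i) := by
      rw [Complex.re_sum]
      exact Finset.sum_congr rfl fun i _ => Complex.ofReal_re _
    have hfirst : (((W 0 : ℝ) : ℂ) * (k : ℂ)).re = W 0 * k := by
      have hh : ((W 0 : ℝ) : ℂ) * (k : ℂ) = (((W 0 * k : ℝ)) : ℂ) := by push_cast; ring
      rw [hh, Complex.ofReal_re]
    rw [Complex.add_re, hlhs, hfirst] at h1
    have h2 : -(∑ γ ∈ Box.erase 0, ((W γ : ℝ) : ℂ) * Z γ).re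
        ≤ ‖∑ γ ∈ Box.erase 0, ((W γ : ℝ) : ℂ) * Z γ‖ := by
      calc -(∑ γ ∈ Box.erase 0, ((W γ : ℝ) : ℂ) * Z γ).re
          ≤ |(∑ γ ∈ Box.erase 0, ((W γ : ℝ) : ℂ) * Z γ).re| := neg_le_abs _
        _ ≤ ‖∑ γ ∈ Box.erase 0, ((W γ : ℝ) : ℂ) * Z γ‖ := Complex.abs_re_le_norm _
        _ = ‖∑ γ ∈ Box.erase 0, ((W γ : ℝ) : ℂ) * Z γ‖ := rfl
    have h3 : ‖∑ γ ∈ Box.erase 0, ((W γ : ℝ) : ℂ) * Z γ‖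
        ≤ ∑ γ ∈ Box.erase 0, (Q : ℝ) ^ l * ‖Z γ‖ := by
      calc ‖∑ γ ∈ Box.erase 0, ((W γ : ℝ) : ℂ) * Z γ‖
          ≤ ∑ γ ∈ Box.erase 0, ‖((W γ : ℝ) : ℂ) * Z γ‖ := norm_sum_le _ _
        _ ≤ ∑ γ ∈ Box.erase 0, (Q : ℝ) ^ l * ‖Z γ‖ := by
            apply Finset.sum_le_sum
            intro γ _
            rw [norm_mul, Complex.norm_real, Real.norm_eq_abs]
            exact mul_le_mul_of_nonneg_right (hWabs γ) (norm_nonneg _)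
    rw [← Finset.mul_sum] at h3
    linarith
  have hW0k : (1 / 3) * (Q : ℝ) ^ l * (k : ℝ) ≤ W 0 * (k : ℝ) :=
    mul_le_mul_of_nonneg_right hW0 (Nat.cast_nonneg k)
  have hfinal : (k : ℝ) / 3 ≤ ∑ γ ∈ Box.erase 0, ‖Z γ‖ := by
    have h10 := le_trans hW0k hkey
    have h9 : (k : ℝ) / 3 * (Q : ℝ) ^ l ≤ (∑ γ ∈ Box.erase 0, ‖Z γ‖) * (Q : ℝ) ^ l := by
      nlinarith [h10]
    exact (mul_le_mul_iff_of_pos_right hQl).mp h9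
  -- translate to the statement's sum
  have hbox : freqBox l J = Box.erase 0 := by
    ext γ
    rw [hBoxdef]
    simp only [freqBox, Finset.mem_filter, Finset.mem_erase, Fintype.mem_piFinset,
      Finset.mem_Icc, Pi.le_def]
    constructor
    · rintro ⟨⟨h1, h2⟩, h3⟩
      exact ⟨h3, fun i => ⟨h1 i, h2 i⟩⟩
    · rintro ⟨h3, h⟩
      exact ⟨⟨fun i => (h i).1, fun i => (h i).2⟩, h3⟩
  have hterm : ∀ γ : Fin l → ℤ,
      (∑ i : Fin k, Complex.exp (2 * Real.pi * Complex.I * ((∑ j, (γ j : ℝ) * ξ i j : ℝ) : ℂ)))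
        = Z γ := by
    intro γ
    rw [hZdef]
    apply Finset.sum_congr rfl
    intro i _
    rw [show Complex.exp (2 * Real.pi * Complex.I * ((∑ j, (γ j : ℝ) * ξ i j : ℝ) : ℂ))
      = ee (∑ j, (γ j : ℝ) * ξ i j) from rfl, ee_sum]
  calc (k : ℝ) / 3 ≤ ∑ γ ∈ Box.erase 0, ‖Z γ‖ := hfinal
    _ = ∑ γ ∈ freqBox l J,
        ‖∑ i : Fin k, Complex.exp (2 * Real.pi * Complex.I
          * ((∑ j, (γ j : ℝ) * ξ i j : ℝ) : ℂ))‖ := by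
        rw [hbox]
        exact Finset.sum_congr rfl fun γ _ => by rw [hterm γ]

end BMVproof
end

section
/- Let ε > 0, b ∈ ℝ^L, V a proper linear subspace of ℝ^L, and v ∈ ℤ^L a vector not belonging to the orthogonal complement V^⊥. Let S = {b + x + ℤ^L : x ∈ V} ⊂ 𝕋^L and suppose X ⊆ S is ε-dense in S, meaning: for every s ∈ S there exist x ∈ X ∩ S and w ∈ ℤ^L such that ‖x − s − w‖_∞ ≤ ε (for representatives in ℝ^L). Then the set {v·x + ℤ : x ∈ X} ⊂ 𝕋 is (L‖v‖_∞ ε)-dense in 𝕋, i.e. for every t ∈ 𝕋 some element of this set is within distance L‖v‖_∞ ε of t on ℝ/ℤ. -/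
open scoped BigOperators
open Matrix

/-- **Lemma 3.** Let `S ⊆ 𝕋^L` be the projection of the affine subspace `b + V`, with
`V ⊊ ℝ^L`, and let `v ∈ ℤ^L` not be orthogonal to `V`. If `X ⊆ S` is `ε`-dense in `S`,
then `{v·x : x ∈ X} ⊆ 𝕋` is `(L ‖v‖_∞ ε)`-dense in `𝕋`. -/
theorem statement12 (L : ℕ) (hL : 0 < L) (ε : ℝ) (hε : 0 < ε) (b : Fin L → ℝ)
    (V : Submodule ℝ (Fin L → ℝ)) (hV : V ≠ ⊤) (v : Fin L → ℤ)
    (hv : ¬ ∀ x ∈ V, (∑ i, (v i : ℝ) * x i) = 0)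
    (S : Set (Fin L → Torus1))
    (hS : S = (fun y : Fin L → ℝ => fun i => ((y i : ℝ) : Torus1)) ''
      {y : Fin L → ℝ | ∃ x ∈ V, y = b + x})
    (X : Set (Fin L → Torus1)) (hXS : X ⊆ S)
    (hdense : ∀ s ∈ S, ∃ x ∈ X, ∀ i, dist (x i) (s i) ≤ ε) :
    ∀ t : Torus1, ∃ x ∈ X,
      dist (∑ i, v i • x i) t ≤
        (L : ℝ) * ((Finset.univ.sup fun i => (v i).natAbs : ℕ) : ℝ) * ε := by
  intro t
  push_neg at hv
  obtain ⟨x0, hx0V, hx00⟩ := hv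
  obtain ⟨r, hr⟩ := QuotientAddGroup.mk_surjective t
  set c : ℝ := (r - ∑ i, (v i : ℝ) * b i) / (∑ i, (v i : ℝ) * x0 i) with hc
  set y : Fin L → ℝ := b + c • x0 with hy
  have hyS : (fun i => ((y i : ℝ) : Torus1)) ∈ S := by
    rw [hS]
    exact ⟨y, ⟨c • x0, V.smul_mem c hx0V, rfl⟩, rfl⟩
  obtain ⟨x, hxX, hxd⟩ := hdense _ hyS
  refine ⟨x, hxX, ?_⟩
  have hts : t = ∑ i, v i • ((y i : ℝ) : Torus1) := by
    have : (∑ i, v i • ((y i : ℝ) : Torus1)) = ((∑ i, (v i : ℝ) * y i : ℝ) : Torus1) := by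
      have : ((∑ i, (v i : ℝ) * y i : ℝ) : Torus1)
          = ∑ i, (((v i : ℝ) * y i : ℝ) : Torus1) :=
        map_sum (QuotientAddGroup.mk' (AddSubgroup.zmultiples (1:ℝ))) _ _
      rw [this]
      congr 1
      ext i
      rw [show (((v i : ℝ) * y i : ℝ) : Torus1) = v i • ((y i : ℝ) : Torus1) from ?_]
      rw [← zsmul_eq_mul]
      exact map_zsmul (QuotientAddGroup.mk' (AddSubgroup.zmultiples (1:ℝ))) _ _
    rw [this]
    have : (∑ i, (v i : ℝ) * y i) = r := by
      simp only [hy, Pi.add_apply, Pi.smul_apply, smul_eq_mul, mul_add]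
      rw [Finset.sum_add_distrib]
      have : ∑ i, (v i : ℝ) * (c * x0 i) = c * ∑ i, (v i : ℝ) * x0 i := by
        rw [Finset.mul_sum]; congr 1; ext i; ring
      rw [this, hc, div_mul_cancel₀ _ hx00]
      ring
    rw [this, hr]
  rw [hts]
  calc dist (∑ i, v i • x i) (∑ i, v i • ((y i : ℝ) : Torus1))
      ≤ ∑ i, dist (v i • x i) (v i • ((y i : ℝ) : Torus1)) := dist_sum_sum_le _ _ _
    _ ≤ ∑ _i : Fin L, ((Finset.univ.sup fun i => (v i).natAbs : ℕ) : ℝ) * ε := by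
        apply Finset.sum_le_sum
        intro i _
        have h1 : dist (v i • x i) (v i • ((y i : ℝ) : Torus1))
            ≤ ‖v i‖ * dist (x i) (((y i : ℝ) : Torus1)) := by
          rw [dist_eq_norm, ← zsmul_sub, dist_eq_norm]
          exact norm_zsmul_le _ _
        have h2 : ‖v i‖ ≤ ((Finset.univ.sup fun i => (v i).natAbs : ℕ) : ℝ) := by
          have h3 : (v i).natAbs ≤ Finset.univ.sup fun i => (v i).natAbs :=
            Finset.le_sup (f := fun i => (v i).natAbs) (Finset.mem_univ i)
          calc ‖v i‖ = ((v i).natAbs : ℝ) := by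
                rw [Int.norm_eq_abs, ← Int.cast_abs, Int.abs_eq_natAbs, Int.cast_natCast]
            _ ≤ _ := by exact_mod_cast h3
        calc dist (v i • x i) (v i • ((y i : ℝ) : Torus1))
            ≤ ‖v i‖ * dist (x i) (((y i : ℝ) : Torus1)) := h1
          _ ≤ ((Finset.univ.sup fun i => (v i).natAbs : ℕ) : ℝ) * ε := by
              apply mul_le_mul h2 (hxd i) dist_nonneg
              positivity
    _ = (L : ℝ) * ((Finset.univ.sup fun i => (v i).natAbs : ℕ) : ℝ) * ε := by
        rw [Finset.sum_const, Finset.card_univ, Fintype.card_fin]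
        push_cast; ring
end

section
/- Let A(x) ∈ M_{L×N}(ℤ[x]) with A(x) = A_0 + xA_1 + ⋯ + x^D A_D, suppose the ℚ-vector space spanned by the rows of the non-constant part A_*(x) = xA_1 + ⋯ + x^D A_D has dimension ℓ, and suppose A satisfies condition (b): for all v ∈ ℚ^L and w ∈ ℚ^N, if v·A_d w = 0 for every d = 1, …, D then v·A_0 w = 0. Then there exist matrices T ∈ M_{L×ℓ}(ℚ) and B(x) ∈ M_{ℓ×N}(ℤ[x]) such that: (i) A(x) = T·B(x); (ii) the rows of B_*(x) are ℚ-linearly independent (B_* has full rank ℓ); and (iii) there is a positive integer q such that qT has integer entries and ‖qT‖_∞ ≤ C(ℓ) · ‖A_*‖_∞^ℓ for a constant C(ℓ) depending only on ℓ. -/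
open scoped BigOperators
open Matrix

/-- The rows of the non-constant part `A_*(x)`, viewed as rational vectors obtained by
concatenating the coefficient matrices `A 1, …, A D` (row `i` is the row `i` of
`[A 1 ⋯ A D]`). -/
def starRows {L N D : ℕ} (A : Fin (D + 1) → Matrix (Fin L) (Fin N) ℤ) :
    Fin L → (Fin D × Fin N → ℚ) :=
  fun i p => ((A p.1.succ i p.2 : ℤ) : ℚ)



/-- From a family whose span has finrank `n`, select `n` indices giving a linearly
independent subfamily with the same span. -/
lemma pick_rows {η : Type*} [Finite η] {V : Type*} [AddCommGroup V] [Module ℚ V] (f : η → V) (n : ℕ)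
    (hn : Module.finrank ℚ (Submodule.span ℚ (Set.range f)) = n) :
    ∃ s : Fin n → η, LinearIndependent ℚ (f ∘ s) ∧
      Submodule.span ℚ (Set.range (f ∘ s)) = Submodule.span ℚ (Set.range f) := by
  classical
  obtain ⟨b, hbsub, hbspan, hbind⟩ := exists_linearIndependent ℚ (Set.range f)
  have hbfin : b.Finite := (Set.finite_range f).subset hbsub
  haveI := hbfin.fintype
  have hcard : Fintype.card b = n := by
    have h1 := finrank_span_set_eq_card hbind
    rw [hbspan, hn] at h1
    rw [← Set.toFinset_card]
    exact h1.symm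
  let e : Fin n ≃ b := (Fintype.equivFinOfCardEq hcard).symm
  have hsel : ∀ k : Fin n, ∃ i : η, f i = ((e k : V)) := fun k => hbsub (e k).2
  choose s hs using hsel
  have hfs : f ∘ s = fun k => ((e k : V)) := funext fun k => hs k
  have hrange : Set.range (fun k : Fin n => ((e k : V))) = b := by
    have : (fun k : Fin n => ((e k : V))) = ((↑) : b → V) ∘ e := rfl
    rw [this, Set.range_comp, Equiv.range_eq_univ, Set.image_univ, Subtype.range_coe]
  refine ⟨s, ?_, ?_⟩
  · rw [hfs]; exact hbind.comp e e.injective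
  · rw [hfs, hrange, hbspan]

lemma pick_cols {n : ℕ} {ι : Type*} [Fintype ι] [DecidableEq ι] (g : Fin n → ι → ℚ)
    (hg : LinearIndependent ℚ g) :
    ∃ p : Fin n → ι, (Matrix.of fun k k' => g k (p k')).det ≠ 0 := by
  classical
  set M : Matrix (Fin n) ι ℚ := Matrix.of g with hM
  have hrank : M.rank = n := by
    rw [Matrix.rank_eq_finrank_span_row]
    have : Set.range M.row = Set.range g := rfl
    rw [this]
    simpa using finrank_span_eq_card hg
  have hn : Module.finrank ℚ (Submodule.span ℚ (Set.range Mᵀ)) = n := by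
    change Module.finrank ℚ (Submodule.span ℚ (Set.range M.col)) = n
    rw [← Matrix.range_mulVecLin]
    exact hrank
  obtain ⟨p, hp, -⟩ := pick_rows Mᵀ n hn
  refine ⟨p, ?_⟩
  set Q : Matrix (Fin n) (Fin n) ℚ := Matrix.of fun k k' => g k (p k') with hQ
  have hcols : (fun k' => Qᵀ k') = Mᵀ ∘ p := by
    funext k' k; rfl
  have hunit : IsUnit Q := by
    rw [← Matrix.linearIndependent_cols_iff_isUnit]
    exact hp
  have := (Matrix.isUnit_iff_isUnit_det Q).mp hunit
  exact this.ne_zero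


lemma entry_abs_le {L N D : ℕ} (A : Fin (D + 1) → Matrix (Fin L) (Fin N) ℤ)
    {d : Fin (D + 1)} (hd : d ≠ 0) (i : Fin L) (j : Fin N) :
    |A d i j| ≤ (starNorm A : ℤ) := by
  have h1 : (A d i j).natAbs ≤ starNorm A := by
    have h2 : (A d i j).natAbs ≤ Finset.univ.sup
        (fun p : Fin L × Fin N => (A d p.1 p.2).natAbs) :=
      Finset.le_sup (f := fun p : Fin L × Fin N => (A d p.1 p.2).natAbs)
        (Finset.mem_univ ((i, j) : Fin L × Fin N))
    exact le_trans h2 (Finset.le_sup (f := fun d => Finset.univ.sup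
      fun p : Fin L × Fin N => (A d p.1 p.2).natAbs)
      (Finset.mem_filter.mpr ⟨Finset.mem_univ _, hd⟩))
  rw [Int.abs_eq_natAbs]
  exact_mod_cast h1

/-- **Lemma 4.** If the `ℚ`-span of the rows of `A_*(x)` has dimension `ℓ` and `A`
satisfies condition (b), then `A(x) = T B(x)` with `T ∈ M_{L×ℓ}(ℚ)`,
`B(x) ∈ M_{ℓ×N}(ℤ[x])` whose non-constant part has `ℚ`-linearly independent rows, and
there is `q ≥ 1` with `qT` integral and `‖qT‖_∞ ≤ C(ℓ) ‖A_*‖_∞^ℓ`. -/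
theorem statement13 (L N D l : ℕ) (hL : 0 < L) (hN : 0 < N) (hD : 0 < D) (hl : 0 < l) :
    ∃ C : ℝ, 0 < C ∧
      ∀ A : Fin (D + 1) → Matrix (Fin L) (Fin N) ℤ,
        Module.finrank ℚ (Submodule.span ℚ (Set.range (starRows A))) = l →
        CondB A →
        ∃ (T : Matrix (Fin L) (Fin l) ℚ) (B : Fin (D + 1) → Matrix (Fin l) (Fin N) ℤ)
          (q : ℕ), 0 < q ∧
          (∀ d : Fin (D + 1), (A d).map ((↑) : ℤ → ℚ) = T * (B d).map ((↑) : ℤ → ℚ)) ∧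
          LinearIndependent ℚ (starRows B) ∧
          (∀ i j, ∃ z : ℤ, (q : ℚ) * T i j = (z : ℚ)) ∧
          (∀ i j, (|(q : ℚ) * T i j| : ℚ) ≤ C * (starNorm A : ℝ) ^ l) := by
  classical
  refine ⟨(Nat.factorial l : ℝ), by positivity, ?_⟩
  intro A hrank hCB
  obtain ⟨s, hs_ind, hs_span⟩ := pick_rows (starRows A) l hrank
  obtain ⟨p, hpdet⟩ := pick_cols (starRows A ∘ s) hs_ind
  set Sz : Matrix (Fin l) (Fin l) ℤ :=
    Matrix.of (fun k k' => A (p k').1.succ (s k) (p k').2) with hSzdef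
  set S : Matrix (Fin l) (Fin l) ℚ := Sz.map ((↑) : ℤ → ℚ) with hSdef
  have hSg : S = Matrix.of fun k k' => (starRows A ∘ s) k (p k') := rfl
  have hSdet : S.det ≠ 0 := by rw [hSg]; exact hpdet
  have hScast : S.det = ((Sz.det : ℤ) : ℚ) := by
    rw [hSdef]
    exact (RingHom.map_det (Int.castRingHom ℚ) Sz).symm
  have hSzdet : Sz.det ≠ 0 := by
    intro h; rw [hScast, h] at hSdet; simp at hSdet
  have hSu : IsUnit S.det := isUnit_iff_ne_zero.mpr hSdet
  set Rp : Matrix (Fin L) (Fin l) ℚ :=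
    Matrix.of (fun i k' => starRows A i (p k')) with hRpdef
  set T : Matrix (Fin L) (Fin l) ℚ := Rp * S⁻¹ with hTdef
  -- the key relation: every row of starRows A is the T-combination of selected rows
  have hTS : T * S = Rp := by
    rw [hTdef, Matrix.mul_assoc, Matrix.nonsing_inv_mul S hSu, Matrix.mul_one]
  have hkey : ∀ i, starRows A i = fun q => ∑ k, T i k * starRows A (s k) q := by
    intro i
    have hmem : starRows A i ∈ Submodule.span ℚ (Set.range (starRows A ∘ s)) := by
      rw [hs_span]; exact Submodule.subset_span (Set.mem_range_self i)
    obtain ⟨c, hc⟩ := (Submodule.mem_span_range_iff_exists_fun ℚ).mp hmem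
    have hcS : c ᵥ* S = Rp i := by
      funext k'
      have h1 := congrFun hc (p k')
      simp only [Finset.sum_apply, Pi.smul_apply, smul_eq_mul, Function.comp_apply] at h1
      simpa [Matrix.vecMul, dotProduct, hSdef, hSzdef, hRpdef, starRows] using h1
    have hTSrow : T i ᵥ* S = Rp i := by
      funext k'
      have := congrFun (congrFun hTS i) k'
      simpa [Matrix.mul_apply, Matrix.vecMul, dotProduct] using this
    have hcT : c = T i := by
      have h2 : (c ᵥ* S) ᵥ* S⁻¹ = (T i ᵥ* S) ᵥ* S⁻¹ := by rw [hcS, hTSrow]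
      rwa [Matrix.vecMul_vecMul, Matrix.vecMul_vecMul, Matrix.mul_nonsing_inv S hSu,
        Matrix.vecMul_one, Matrix.vecMul_one] at h2
    funext q
    have h3 := congrFun hc q
    simp only [Finset.sum_apply, Pi.smul_apply, smul_eq_mul, Function.comp_apply] at h3
    rw [← h3, hcT]
  set B : Fin (D + 1) → Matrix (Fin l) (Fin N) ℤ :=
    fun d => (A d).submatrix s id with hBdef
  have hstarB : starRows B = starRows A ∘ s := by
    funext k q; rfl
  -- factorization for nonconstant part
  have hfac_ne : ∀ d : Fin (D + 1), d ≠ 0 → ∀ i j,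
      ((A d i j : ℤ) : ℚ) = ∑ k, T i k * ((A d (s k) j : ℤ) : ℚ) := by
    intro d hd i j
    obtain ⟨d', rfl⟩ := Fin.exists_succ_eq.mpr hd
    have := congrFun (hkey i) (d', j)
    simpa [starRows] using this
  -- factorization for constant part, via condition (b)
  have hfac0 : ∀ i j,
      ((A 0 i j : ℤ) : ℚ) = ∑ k, T i k * ((A 0 (s k) j : ℤ) : ℚ) := by
    intro i j
    set v : Fin L → ℚ :=
      (fun i' => (if i' = i then (1:ℚ) else 0) - ∑ k, if i' = s k then T i k else 0) with hvdef
    set w : Fin N → ℚ := (fun j' => if j' = j then (1:ℚ) else 0) with hwdef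
    have hcomp : ∀ M : Matrix (Fin L) (Fin N) ℚ,
        v ⬝ᵥ M.mulVec w = M i j - ∑ k, T i k * M (s k) j := by
      intro M
      have hMw : M.mulVec w = fun i' => M i' j := by
        funext i'
        simp [Matrix.mulVec, dotProduct, hwdef, mul_ite]
      rw [hMw]
      simp only [dotProduct, hvdef, sub_mul, Finset.sum_sub_distrib,
        Finset.sum_mul, ite_mul, one_mul, zero_mul]
      congr 1
      · simp
      · rw [Finset.sum_comm]
        refine Finset.sum_congr rfl fun k _ => ?_
        simp
    have hvd : ∀ d : Fin (D + 1), d ≠ 0 →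
        v ⬝ᵥ ((A d).map ((↑) : ℤ → ℚ)).mulVec w = 0 := by
      intro d hd
      rw [hcomp]
      have := hfac_ne d hd i j
      simp only [Matrix.map_apply]
      linarith [this]
    have h0 := hCB v w hvd
    rw [hcomp] at h0
    simp only [Matrix.map_apply] at h0
    linarith [h0]
  have hfac : ∀ d : Fin (D + 1),
      (A d).map ((↑) : ℤ → ℚ) = T * (B d).map ((↑) : ℤ → ℚ) := by
    intro d
    ext i j
    rw [Matrix.mul_apply]
    simp only [Matrix.map_apply, hBdef, Matrix.submatrix_apply, id]
    by_cases hd : d = 0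
    · subst hd; exact hfac0 i j
    · exact hfac_ne d hd i j
  -- Cramer's rule and bounds
  set q : ℕ := Sz.det.natAbs with hqdef
  have hq : 0 < q := Int.natAbs_pos.mpr hSzdet
  have hrowz : ∀ i : Fin L, Rp i = fun k => ((A (p k).1.succ i (p k).2 : ℤ) : ℚ) := by
    intro i; funext k; rfl
  have hadj : S.det • T = Rp * S.adjugate := by
    rw [hTdef, Matrix.inv_def, Ring.inverse_eq_inv, Matrix.mul_smul, smul_smul,
      mul_inv_cancel₀ hSdet, one_smul]
  have hcr : ∀ i j, S.det * T i j
      = (((Sz.updateRow j (fun k => A (p k).1.succ i (p k).2)).det : ℤ) : ℚ) := by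
    intro i j
    have h1 : S.det * T i j = (Rp i ᵥ* S.adjugate) j := by
      have := congrFun (congrFun hadj i) j
      simpa [Matrix.mul_apply, Matrix.vecMul, dotProduct] using this
    have h2 : Rp i ᵥ* S.adjugate = Sᵀ.cramer (Rp i) := by
      rw [← Matrix.mulVec_transpose, Matrix.adjugate_transpose,
        Matrix.cramer_eq_adjugate_mulVec]
    have h3 : Sᵀ.cramer (Rp i) j = (S.updateRow j (Rp i)).det := by
      rw [Matrix.cramer_apply, Matrix.updateCol_transpose, Matrix.det_transpose]
    have h4 : S.updateRow j (Rp i)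
        = (Sz.updateRow j (fun k => A (p k).1.succ i (p k).2)).map ((↑) : ℤ → ℚ) := by
      ext k k'
      rw [Matrix.map_apply, Matrix.updateRow_apply, Matrix.updateRow_apply]
      by_cases hk : k = j <;> simp [hk, hSdef, hRpdef, starRows]
    rw [h1, h2, h3, h4]
    exact (RingHom.map_det (Int.castRingHom ℚ) _).symm
  have hzq : (q : ℤ) = Sz.det.sign * Sz.det := by
    rcases lt_trichotomy Sz.det 0 with h | h | h
    · rw [hqdef, Int.ofNat_natAbs_of_nonpos h.le, Int.sign_eq_neg_one_iff_neg.mpr h]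
      ring
    · exact absurd h hSzdet
    · rw [hqdef, Int.natAbs_of_nonneg h.le, Int.sign_eq_one_iff_pos.mpr h, one_mul]
  have hint : ∀ i j, (q : ℚ) * T i j
      = ((Sz.det.sign * (Sz.updateRow j (fun k => A (p k).1.succ i (p k).2)).det : ℤ) : ℚ) := by
    intro i j
    have h6 : ((q : ℤ) : ℚ) = ((Sz.det.sign : ℤ) : ℚ) * ((Sz.det : ℤ) : ℚ) := by
      rw [hzq]; push_cast; ring
    calc (q : ℚ) * T i j
        = ((Sz.det.sign : ℤ) : ℚ) * (((Sz.det : ℤ) : ℚ) * T i j) := by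
          rw [← mul_assoc, ← h6]; norm_cast
      _ = ((Sz.det.sign : ℤ) : ℚ) *
            (((Sz.updateRow j (fun k => A (p k).1.succ i (p k).2)).det : ℤ) : ℚ) := by
          rw [← hScast, hcr i j]
      _ = _ := by push_cast; ring
  have hdetb : ∀ i j, |(Sz.updateRow j (fun k => A (p k).1.succ i (p k).2)).det|
      ≤ (l.factorial : ℤ) * (starNorm A : ℤ) ^ l := by
    intro i j
    have hent : ∀ k k', |(Sz.updateRow j (fun k => A (p k).1.succ i (p k).2)) k k'|
        ≤ (starNorm A : ℤ) := by
      intro k k'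
      rw [Matrix.updateRow_apply]
      split
      · exact entry_abs_le A (Fin.succ_ne_zero _) i _
      · exact entry_abs_le A (Fin.succ_ne_zero _) (s k) _
    have h7 := Matrix.det_le (abv := (AbsoluteValue.abs : AbsoluteValue ℤ ℤ))
      (x := (starNorm A : ℤ)) (fun k k' => hent k k')
    simpa [Fintype.card_fin, nsmul_eq_mul, AbsoluteValue.abs_apply] using h7
  refine ⟨T, B, q, hq, hfac, ?_, ?_, ?_⟩
  · rw [hstarB]; exact hs_ind
  · intro i j
    exact ⟨_, hint i j⟩
  · intro i j
    rw [hint i j]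
    have h8 : |(Sz.det.sign * (Sz.updateRow j (fun k => A (p k).1.succ i (p k).2)).det : ℤ)|
        ≤ (l.factorial : ℤ) * (starNorm A : ℤ) ^ l := by
      rw [abs_mul]
      calc |Sz.det.sign| * |(Sz.updateRow j (fun k => A (p k).1.succ i (p k).2)).det|
          ≤ 1 * |(Sz.updateRow j (fun k => A (p k).1.succ i (p k).2)).det| := by
            have : |Sz.det.sign| ≤ 1 := by
              rcases lt_trichotomy Sz.det 0 with h | h | h
              · rw [Int.sign_eq_neg_one_iff_neg.mpr h]; norm_num
              · rw [h]; norm_num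
              · rw [Int.sign_eq_one_iff_pos.mpr h]; norm_num
            exact mul_le_mul_of_nonneg_right this (abs_nonneg _)
        _ = _ := by rw [one_mul]
        _ ≤ _ := hdetb i j
    have h9 : (|((Sz.det.sign * (Sz.updateRow j (fun k => A (p k).1.succ i (p k).2)).det : ℤ) : ℚ)| : ℚ)
        ≤ ((l.factorial : ℤ) * (starNorm A : ℤ) ^ l : ℚ) := by
      rw [← Int.cast_abs]
      exact_mod_cast h8
    calc ((|((Sz.det.sign * (Sz.updateRow j (fun k => A (p k).1.succ i (p k).2)).det : ℤ) : ℚ)| : ℚ) : ℝ)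
        ≤ (((l.factorial : ℤ) * (starNorm A : ℤ) ^ l : ℚ) : ℝ) := by exact_mod_cast h9
      _ = (l.factorial : ℝ) * (starNorm A : ℝ) ^ l := by push_cast; ring
end
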